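/- arXiv:1008.1824 — 6 statements merged into one kernel-verified Lean document; each statement's English description precedes it below -/
import Mathlib

section
/- (Key decomposition bound in the proof of the Discrete Adiabatic Theorem.) Let Ω be a finite state space, let P_final be a row-stochastic matrix on Ω with stationary distribution π_f (π_f P_final = π_f), let T be a positive integer, and for each j ∈ {1,…,T} suppose P_j = (1−c_j) R_j + c_j P_final, where c_j ∈ [0,1] and R_j is a row-stochastic matrix on Ω. Then for every integer N with 0 ≤ N < T and every probability distribution ν on Ω, ‖ν P_1 P_2 ⋯ P_T − π_f‖_TV ≤ (∏_{j=N+1}^{T} c_j) · max_μ ‖μ P_final^{T−N} − π_f‖_TV + (1 − ∏_{j=N+1}^{T} c_j), where the maximum is over all probability distributions μ on Ω. -/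
open Matrix BigOperators Finset

/-- `ν` is a probability distribution on the finite set `Ω`. -/
def IsProbDist {Ω : Type*} [Fintype Ω] (ν : Ω → ℝ) : Prop :=
  (∀ i, 0 ≤ ν i) ∧ ∑ i, ν i = 1

/-- Total variation distance between two (signed) measures on a finite set. -/
noncomputable def tvDist {Ω : Type*} [Fintype Ω] (μ ν : Ω → ℝ) : ℝ :=
  (1 / 2) * ∑ x, |μ x - ν x|

/-- A matrix is row-stochastic: nonnegative entries and each row sums to `1`. -/
def IsRowStochastic {Ω : Type*} [Fintype Ω] (P : Matrix Ω Ω ℝ) : Prop :=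
  (∀ i j, 0 ≤ P i j) ∧ ∀ i, ∑ j, P i j = 1

section Aux
set_option linter.unusedSectionVars false

variable {Ω : Type*} [Fintype Ω] [DecidableEq Ω]

lemma aux_vecMul_prob {ν : Ω → ℝ} {M : Matrix Ω Ω ℝ}
    (hν : IsProbDist ν) (hM : IsRowStochastic M) : IsProbDist (ν ᵥ* M) := by
  constructor
  · intro j
    exact Finset.sum_nonneg fun i _ => mul_nonneg (hν.1 i) (hM.1 i j)
  · simp only [Matrix.vecMul, dotProduct]
    rw [Finset.sum_comm]
    simp only [← Finset.mul_sum, hM.2, mul_one]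
    exact hν.2

lemma aux_stoch_mul {A B : Matrix Ω Ω ℝ}
    (hA : IsRowStochastic A) (hB : IsRowStochastic B) : IsRowStochastic (A * B) := by
  constructor
  · intro i j
    exact Finset.sum_nonneg fun k _ => mul_nonneg (hA.1 i k) (hB.1 k j)
  · intro i
    simp only [Matrix.mul_apply]
    rw [Finset.sum_comm]
    simp only [← Finset.mul_sum, hB.2, mul_one]
    exact hA.2 i

lemma aux_stoch_one : IsRowStochastic (1 : Matrix Ω Ω ℝ) := by
  constructor
  · intro i j
    by_cases h : i = j <;> simp [Matrix.one_apply, h]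
  · intro i
    simp [Matrix.one_apply]

lemma aux_stoch_pow {A : Matrix Ω Ω ℝ} (hA : IsRowStochastic A) (n : ℕ) :
    IsRowStochastic (A ^ n) := by
  induction n with
  | zero => simpa using aux_stoch_one
  | succ n ih => rw [pow_succ]; exact aux_stoch_mul ih hA

lemma aux_stoch_combo {A B : Matrix Ω Ω ℝ} {t : ℝ} (ht : t ∈ Set.Icc (0:ℝ) 1)
    (hA : IsRowStochastic A) (hB : IsRowStochastic B) :
    IsRowStochastic ((1 - t) • A + t • B) := by
  constructor
  · intro i j
    have := hA.1 i j
    have := hB.1 i j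
    have := ht.1
    have := ht.2
    simp only [Matrix.add_apply, Matrix.smul_apply, smul_eq_mul]
    nlinarith
  · intro i
    simp only [Matrix.add_apply, Matrix.smul_apply, smul_eq_mul, Finset.sum_add_distrib,
      ← Finset.mul_sum, hA.2, hB.2]
    ring

lemma aux_tv_le_one {μ ν : Ω → ℝ} (hμ : IsProbDist μ) (hν : IsProbDist ν) :
    tvDist μ ν ≤ 1 := by
  unfold tvDist
  have h : ∑ x, |μ x - ν x| ≤ ∑ x, (μ x + ν x) := by
    apply Finset.sum_le_sum
    intro x _
    rw [abs_sub_le_iff]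
    constructor <;> nlinarith [hμ.1 x, hν.1 x]
  have h2 : ∑ x, (μ x + ν x) = 2 := by
    rw [Finset.sum_add_distrib, hμ.2, hν.2]; norm_num
  linarith

lemma aux_tv_nonneg {μ ν : Ω → ℝ} : 0 ≤ tvDist μ ν := by
  unfold tvDist
  have : (0:ℝ) ≤ ∑ x, |μ x - ν x| := Finset.sum_nonneg fun x _ => abs_nonneg _
  linarith

lemma aux_tv_convex {x y π : Ω → ℝ} {t : ℝ} (ht : t ∈ Set.Icc (0:ℝ) 1) :
    tvDist ((1 - t) • x + t • y) π ≤ (1 - t) * tvDist x π + t * tvDist y π := by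
  unfold tvDist
  have key : ∑ i, |((1 - t) • x + t • y) i - π i|
      ≤ (1 - t) * ∑ i, |x i - π i| + t * ∑ i, |y i - π i| := by
    rw [Finset.mul_sum, Finset.mul_sum, ← Finset.sum_add_distrib]
    apply Finset.sum_le_sum
    intro i _
    simp only [Pi.add_apply, Pi.smul_apply, smul_eq_mul]
    calc |(1 - t) * x i + t * y i - π i|
        = |(1 - t) * (x i - π i) + t * (y i - π i)| := by ring_nf
      _ ≤ |(1 - t) * (x i - π i)| + |t * (y i - π i)| := abs_add_le _ _
      _ = (1 - t) * |x i - π i| + t * |y i - π i| := by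
          rw [abs_mul, abs_mul, abs_of_nonneg (by linarith [ht.1, ht.2] : (0:ℝ) ≤ 1 - t),
            abs_of_nonneg ht.1]
  linarith


lemma aux_vecMul_matsmul (v : Ω → ℝ) (s : ℝ) (M : Matrix Ω Ω ℝ) :
    v ᵥ* (s • M) = s • (v ᵥ* M) := by
  ext j
  simp only [Matrix.vecMul, dotProduct, Matrix.smul_apply, smul_eq_mul, Pi.smul_apply,
    Finset.mul_sum]
  apply Finset.sum_congr rfl
  intro i _
  ring

lemma aux_stoch_list (l : List (Matrix Ω Ω ℝ)) (h : ∀ M ∈ l, IsRowStochastic M) :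
    IsRowStochastic l.prod := by
  induction l with
  | nil => simpa using aux_stoch_one
  | cons A l ih =>
    rw [List.prod_cons]
    exact aux_stoch_mul (h A List.mem_cons_self) (ih fun M hM => h M (List.mem_cons_of_mem A hM))

lemma aux_key (Pfin : Matrix Ω Ω ℝ) (πf : Ω → ℝ)
    (hPfin : IsRowStochastic Pfin) (hπf : IsProbDist πf)
    (T : ℕ) (P R : ℕ → Matrix Ω Ω ℝ) (c : ℕ → ℝ)
    (hc : ∀ j ∈ Finset.Icc 1 T, c j ∈ Set.Icc (0:ℝ) 1)
    (hR : ∀ j ∈ Finset.Icc 1 T, IsRowStochastic (R j))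
    (hP : ∀ j ∈ Finset.Icc 1 T, P j = (1 - c j) • R j + c j • Pfin) :
    ∀ (l : List ℕ), (∀ j ∈ l, j ∈ Finset.Icc 1 T) → ∀ (n : ℕ) (μ : Ω → ℝ), IsProbDist μ →
      tvDist (μ ᵥ* (Pfin ^ n * (l.map P).prod)) πf
        ≤ (l.map c).prod *
            sSup {x : ℝ | ∃ μ' : Ω → ℝ, IsProbDist μ' ∧
              x = tvDist (μ' ᵥ* Pfin ^ (n + l.length)) πf}
          + (1 - (l.map c).prod) := by
  intro l
  induction l with
  | nil =>
    intro _ n μ hμ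
    simp only [List.map_nil, List.prod_nil, mul_one, List.length_nil, Nat.add_zero, one_mul]
    have hbdd : BddAbove {x : ℝ | ∃ μ' : Ω → ℝ, IsProbDist μ' ∧
        x = tvDist (μ' ᵥ* Pfin ^ n) πf} := by
      refine ⟨1, ?_⟩
      rintro x ⟨μ', hμ', rfl⟩
      exact aux_tv_le_one (aux_vecMul_prob hμ' (aux_stoch_pow hPfin n)) hπf
    have hmem : tvDist (μ ᵥ* Pfin ^ n) πf ∈ {x : ℝ | ∃ μ' : Ω → ℝ, IsProbDist μ' ∧
        x = tvDist (μ' ᵥ* Pfin ^ n) πf} := ⟨μ, hμ, rfl⟩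
    linarith [le_csSup hbdd hmem]
  | cons h l ih =>
    intro hl n μ hμ
    have hh : h ∈ Finset.Icc 1 T := hl h List.mem_cons_self
    have hl' : ∀ j ∈ l, j ∈ Finset.Icc 1 T := fun j hj => hl j (List.mem_cons_of_mem h hj)
    have hch := hc h hh
    -- decompose the vector
    have hstochl : IsRowStochastic ((l.map P).prod) := by
      apply aux_stoch_list
      intro M hM
      obtain ⟨j, hj, rfl⟩ := List.mem_map.mp hM
      rw [hP j (hl' j hj)]
      exact aux_stoch_combo (hc j (hl' j hj)) (hR j (hl' j hj)) hPfin
    set a := μ ᵥ* Pfin ^ n with ha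
    have hap : IsProbDist a := aux_vecMul_prob hμ (aux_stoch_pow hPfin n)
    have hvec : μ ᵥ* (Pfin ^ n * ((h :: l).map P).prod)
        = (1 - c h) • ((a ᵥ* R h) ᵥ* (l.map P).prod)
          + c h • (μ ᵥ* (Pfin ^ (n + 1) * (l.map P).prod)) := by
      rw [List.map_cons, List.prod_cons, ← Matrix.mul_assoc,
        ← Matrix.vecMul_vecMul, ← Matrix.vecMul_vecMul, ← ha,
        hP h hh, Matrix.vecMul_add, aux_vecMul_matsmul, aux_vecMul_matsmul,
        Matrix.add_vecMul, Matrix.smul_vecMul, Matrix.smul_vecMul]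
      congr 2
      rw [pow_succ, ← Matrix.vecMul_vecMul, ← Matrix.vecMul_vecMul]
    rw [hvec]
    have h1 : tvDist ((a ᵥ* R h) ᵥ* (l.map P).prod) πf ≤ 1 :=
      aux_tv_le_one (aux_vecMul_prob (aux_vecMul_prob hap (hR h hh)) hstochl) hπf
    have h2 := ih hl' (n + 1) μ hμ
    have hlen : n + 1 + l.length = n + (h :: l).length := by simp; omega
    rw [hlen] at h2
    have hconv := aux_tv_convex (x := (a ᵥ* R h) ᵥ* (l.map P).prod)
      (y := μ ᵥ* (Pfin ^ (n + 1) * (l.map P).prod)) (π := πf) hch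
    have hq0 : 0 ≤ (l.map c).prod := by
      apply List.prod_nonneg
      intro x hx
      obtain ⟨j, hj, rfl⟩ := List.mem_map.mp hx
      exact (hc j (hl' j hj)).1
    have hS : 0 ≤ tvDist (μ ᵥ* (Pfin ^ (n + 1) * (l.map P).prod)) πf := aux_tv_nonneg
    have hmul : c h * tvDist (μ ᵥ* (Pfin ^ (n + 1) * (l.map P).prod)) πf
        ≤ c h * ((l.map c).prod *
            sSup {x : ℝ | ∃ μ' : Ω → ℝ, IsProbDist μ' ∧
              x = tvDist (μ' ᵥ* Pfin ^ (n + (h :: l).length)) πf}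
          + (1 - (l.map c).prod)) := mul_le_mul_of_nonneg_left h2 hch.1
    have hmul1 : (1 - c h) * tvDist ((a ᵥ* R h) ᵥ* (l.map P).prod) πf ≤ (1 - c h) * 1 :=
      mul_le_mul_of_nonneg_left h1 (by linarith [hch.2])
    simp only [List.map_cons, List.prod_cons]
    nlinarith [hconv, hmul, hmul1]

end Aux

/-- **Key decomposition bound** in the proof of the Discrete Adiabatic Theorem:
if each step matrix decomposes as `P_j = (1-c_j) R_j + c_j P_final`, then the
distance of `ν P_1 ⋯ P_T` to `π_f` is controlled by the product of the `c_j` over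
the last `T - N` steps. -/
theorem adiabatic_decomposition_bound
    {Ω : Type*} [Fintype Ω] [DecidableEq Ω]
    (Pfin : Matrix Ω Ω ℝ) (πf : Ω → ℝ)
    (hPfin : IsRowStochastic Pfin) (hπf : IsProbDist πf) (hstat : πf ᵥ* Pfin = πf)
    (T : ℕ) (hT : 0 < T)
    (P R : ℕ → Matrix Ω Ω ℝ) (c : ℕ → ℝ)
    (hc : ∀ j ∈ Finset.Icc 1 T, c j ∈ Set.Icc (0:ℝ) 1)
    (hR : ∀ j ∈ Finset.Icc 1 T, IsRowStochastic (R j))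
    (hP : ∀ j ∈ Finset.Icc 1 T, P j = (1 - c j) • R j + c j • Pfin)
    (N : ℕ) (hN : N < T)
    (ν : Ω → ℝ) (hν : IsProbDist ν) :
    tvDist (ν ᵥ* ((List.range T).map (fun j => P (j + 1))).prod) πf
      ≤ (∏ j ∈ Finset.Icc (N + 1) T, c j) *
          sSup {x : ℝ | ∃ μ : Ω → ℝ, IsProbDist μ ∧ x = tvDist (μ ᵥ* Pfin ^ (T - N)) πf}
        + (1 - ∏ j ∈ Finset.Icc (N + 1) T, c j) := by
  have hsplit : (List.range T).map (fun j => P (j + 1))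
      = (List.range N).map (fun j => P (j + 1))
        ++ (List.range (T - N)).map (fun i => P (N + 1 + i)) := by
    have : T = N + (T - N) := by omega
    rw [this, List.range_add, List.map_append, List.map_map]
    congr 1
    rw [show N + (T - N) - N = T - N from by omega]
    apply List.map_congr_left
    intro i _
    simp only [Function.comp_apply]
    rw [show N + i + 1 = N + 1 + i from by omega]
  set l : List ℕ := (List.range (T - N)).map (fun i => N + 1 + i) with hldef
  have hlP : (List.range (T - N)).map (fun i => P (N + 1 + i)) = l.map P := by
    rw [hldef, List.map_map]; rfl
  have hlc : (l.map c).prod = ∏ j ∈ Finset.Icc (N + 1) T, c j := by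
    rw [hldef, List.map_map]
    have e1 : ((List.range (T - N)).map (c ∘ fun i => N + 1 + i)).prod
        = ∏ i ∈ Finset.range (T - N), c (N + 1 + i) := by
      induction (T - N) with
      | zero => simp
      | succ n ih =>
        rw [List.range_succ, List.map_append, List.prod_append, Finset.prod_range_succ, ih]
        simp
    rw [e1, ← Finset.Ico_add_one_right_eq_Icc, Finset.prod_Ico_eq_prod_range]
    have : T + 1 - (N + 1) = T - N := by omega
    rw [this]
  have hlen : l.length = T - N := by simp [hldef]
  have hlmem : ∀ j ∈ l, j ∈ Finset.Icc 1 T := by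
    intro j hj
    rw [hldef] at hj
    obtain ⟨i, hi, rfl⟩ := List.mem_map.mp hj
    simp only [List.mem_range] at hi
    simp only [Finset.mem_Icc]
    omega
  have hμ' : IsProbDist (ν ᵥ* ((List.range N).map (fun j => P (j + 1))).prod) := by
    apply aux_vecMul_prob hν
    apply aux_stoch_list
    intro M hM
    obtain ⟨j, hj, rfl⟩ := List.mem_map.mp hM
    simp only [List.mem_range] at hj
    have hjT : j + 1 ∈ Finset.Icc 1 T := by simp only [Finset.mem_Icc]; omega
    rw [hP _ hjT]
    exact aux_stoch_combo (hc _ hjT) (hR _ hjT) hPfin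
  have key := aux_key Pfin πf hPfin hπf T P R c hc hR hP l hlmem 0
    (ν ᵥ* ((List.range N).map (fun j => P (j + 1))).prod) hμ'
  rw [hsplit, List.prod_append, ← Matrix.vecMul_vecMul, hlP]
  have e2 : (ν ᵥ* ((List.range N).map fun j => P (j + 1)).prod) ᵥ* (l.map P).prod
      = (ν ᵥ* ((List.range N).map fun j => P (j + 1)).prod) ᵥ* (Pfin ^ 0 * (l.map P).prod) := by
    rw [pow_zero, Matrix.one_mul]
  rw [e2]
  rw [hlc, hlen] at key
  simpa using key
end

section
/- (Lower bound for the linear-interpolation example.) Let n ≥ 1 and work on the state space Ω = {0,1,…,n}. Let P_initial be the row-stochastic matrix whose every row is the point mass at 0, and let P_final be the row-stochastic matrix with (P_final)_{i,i+1} = 1 for 0 ≤ i ≤ n−1 and (P_final)_{n,n} = 1, so that π_f = δ_n is the unique stationary distribution of P_final. For s ∈ [0,1] let P_s = (1−s) P_initial + s P_final. Then for every integer T ≥ n and every probability distribution ν on Ω, ‖ν P_{1/T} P_{2/T} ⋯ P_{(T−1)/T} P_1 − δ_n‖_TV ≥ 1 − T! / ((T−n)! · T^n). -/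
open Matrix BigOperators Finset

/-- The transition matrix on `{0,1,…,n}` each of whose rows is the point mass at `0`. -/
noncomputable def exPinit (n : ℕ) : Matrix (Fin (n + 1)) (Fin (n + 1)) ℝ :=
  fun _ j => if j = 0 then 1 else 0

/-- The transition matrix on `{0,1,…,n}` moving deterministically `i ↦ i+1`
(for `i < n`) with absorption at `n`:  `(P_final)_{i,i+1} = 1` for `0 ≤ i ≤ n-1`
and `(P_final)_{n,n} = 1`. -/
noncomputable def exPfin (n : ℕ) : Matrix (Fin (n + 1)) (Fin (n + 1)) ℝ :=
  fun i j => if (j : ℕ) = min ((i : ℕ) + 1) n then 1 else 0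

/-- The point mass `δ_n` at the state `n` of `{0,1,…,n}`. -/
noncomputable def exDelta (n : ℕ) : Fin (n + 1) → ℝ :=
  fun j => if (j : ℕ) = n then 1 else 0

/-! ### Auxiliary lemmas -/

lemma aux_matrix_apply (n : ℕ) (s : ℝ) (i j : Fin (n+1)) :
    ((1 - s) • exPinit n + s • exPfin n) i j
      = (1-s) * (if j = 0 then 1 else 0) + s * (if (j:ℕ) = min ((i:ℕ)+1) n then 1 else 0) := by
  simp [exPinit, exPfin, Matrix.add_apply, Matrix.smul_apply, smul_eq_mul]

lemma aux_row_sum (n : ℕ) (s : ℝ) (i : Fin (n+1)) :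
    ∑ j, ((1 - s) • exPinit n + s • exPfin n) i j = 1 := by
  simp only [aux_matrix_apply]
  rw [Finset.sum_add_distrib]
  have h1 : ∀ j : Fin (n+1), ((j:ℕ) = min ((i:ℕ)+1) n) ↔ j = ⟨min ((i:ℕ)+1) n, by omega⟩ := by
    intro j; simp [Fin.ext_iff]
  simp only [h1]
  simp

lemma aux_filtered_row_sum (n : ℕ) (s : ℝ) (m : ℕ) (hm1 : 1 ≤ m) (hmn : m ≤ n) (i : Fin (n+1)) :
    ∑ j ∈ Finset.univ.filter (fun j : Fin (n+1) => m ≤ (j:ℕ)),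
      ((1 - s) • exPinit n + s • exPfin n) i j
    = if m ≤ (i:ℕ)+1 then s else 0 := by
  rw [Finset.sum_filter]
  simp only [aux_matrix_apply]
  set c : ℕ := min ((i:ℕ)+1) n with hc
  have hclt : c < n + 1 := by omega
  have hcm : m ≤ c ↔ m ≤ (i:ℕ)+1 := by omega
  rw [Finset.sum_eq_single (⟨c, hclt⟩ : Fin (n+1))]
  · by_cases h : m ≤ c
    · have h0 : (⟨c, hclt⟩ : Fin (n+1)) ≠ 0 := by
        simp [Fin.ext_iff]; omega
      simp [h, hcm.mp h, h0, ← hcm]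
    · rw [if_neg h, if_neg (fun hh => h (hcm.mpr hh))]
  · intro j _ hj
    have hjc : (j:ℕ) ≠ c := by
      intro hh; exact hj (by simp [Fin.ext_iff, hh])
    by_cases h0 : j = 0
    · subst h0; simp; omega
    · have : ¬ ((j:ℕ) = c) := hjc
      simp [h0, this]
  · intro h; exact absurd (Finset.mem_univ _) h

lemma aux_step (n : ℕ) (s : ℝ) (m : ℕ) (hm1 : 1 ≤ m) (hmn : m ≤ n) (μ : Fin (n+1) → ℝ) :
    ∑ j ∈ Finset.univ.filter (fun j : Fin (n+1) => m ≤ (j:ℕ)),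
      (μ ᵥ* ((1 - s) • exPinit n + s • exPfin n)) j
    = s * ∑ i ∈ Finset.univ.filter (fun i : Fin (n+1) => m ≤ (i:ℕ)+1), μ i := by
  have hv : ∀ j, (μ ᵥ* ((1 - s) • exPinit n + s • exPfin n)) j
      = ∑ i, μ i * ((1 - s) • exPinit n + s • exPfin n) i j := by
    intro j; rfl
  simp only [hv]
  rw [Finset.sum_comm]
  have : ∀ i : Fin (n+1),
      ∑ j ∈ Finset.univ.filter (fun j : Fin (n+1) => m ≤ (j:ℕ)),
        μ i * ((1 - s) • exPinit n + s • exPfin n) i j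
      = μ i * (if m ≤ (i:ℕ)+1 then s else 0) := by
    intro i
    rw [← Finset.mul_sum, aux_filtered_row_sum n s m hm1 hmn i]
  rw [Finset.sum_congr rfl (fun i _ => this i)]
  rw [Finset.mul_sum, Finset.sum_filter]
  apply Finset.sum_congr rfl
  intro i _
  by_cases h : m ≤ (i:ℕ)+1 <;> simp [h, mul_comm]

noncomputable def muSeq (n T : ℕ) (ν : Fin (n+1) → ℝ) (t : ℕ) : Fin (n+1) → ℝ :=
  ν ᵥ* ((List.range t).map (fun j =>
    (1 - (j + 1 : ℝ) / (T : ℝ)) • exPinit n + ((j + 1 : ℝ) / (T : ℝ)) • exPfin n)).prod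

lemma muSeq_succ (n T : ℕ) (ν : Fin (n+1) → ℝ) (t : ℕ) :
    muSeq n T ν (t+1) = (muSeq n T ν t) ᵥ*
      ((1 - ((t:ℝ) + 1) / (T : ℝ)) • exPinit n + (((t:ℝ) + 1) / (T : ℝ)) • exPfin n) := by
  unfold muSeq
  simp [List.range_succ, Matrix.vecMul_vecMul]

lemma muSeq_probdist (n T : ℕ) (ν : Fin (n+1) → ℝ) (hν : IsProbDist ν)
    (t : ℕ) (ht : t ≤ T) (hT : 1 ≤ T) : IsProbDist (muSeq n T ν t) := by
  induction t with
  | zero => simpa [muSeq] using hν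
  | succ t ih =>
    have ht' : t ≤ T := by omega
    obtain ⟨hpos, hsum⟩ := ih ht'
    rw [muSeq_succ]
    set s : ℝ := ((t:ℝ) + 1) / (T : ℝ) with hs
    have hs0 : 0 ≤ s := by positivity
    have hs1 : s ≤ 1 := by
      rw [hs, div_le_one (by exact_mod_cast hT)]
      have : (t:ℝ) + 1 ≤ (T:ℝ) := by exact_mod_cast ht
      linarith
    constructor
    · intro j
      have hv : ((muSeq n T ν t) ᵥ* ((1 - s) • exPinit n + s • exPfin n)) j
          = ∑ i, muSeq n T ν t i * ((1 - s) • exPinit n + s • exPfin n) i j := rfl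
      rw [hv]
      apply Finset.sum_nonneg
      intro i _
      apply mul_nonneg (hpos i)
      rw [aux_matrix_apply]
      apply add_nonneg
      · apply mul_nonneg (by linarith)
        split <;> norm_num
      · apply mul_nonneg hs0
        split <;> norm_num
    · have hv : ∀ j, ((muSeq n T ν t) ᵥ* ((1 - s) • exPinit n + s • exPfin n)) j
          = ∑ i, muSeq n T ν t i * ((1 - s) • exPinit n + s • exPfin n) i j := fun j => rfl
      simp only [hv]
      rw [Finset.sum_comm]
      calc ∑ i, ∑ j, muSeq n T ν t i * ((1 - s) • exPinit n + s • exPfin n) i j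
          = ∑ i, muSeq n T ν t i := by
            apply Finset.sum_congr rfl; intro i _
            rw [← Finset.mul_sum, aux_row_sum, mul_one]
        _ = 1 := hsum

lemma aux_main_rec (n T : ℕ) (hT : n ≤ T) (ν : Fin (n+1) → ℝ) :
    ∀ k, k ≤ n →
    ∑ j ∈ Finset.univ.filter (fun j : Fin (n+1) => n ≤ (j:ℕ)), muSeq n T ν T j
    = (∏ i ∈ Finset.range k, (((T - i : ℕ):ℝ)/(T:ℝ))) *
      ∑ j ∈ Finset.univ.filter (fun j : Fin (n+1) => n - k ≤ (j:ℕ)), muSeq n T ν (T - k) j := by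
  intro k
  induction k with
  | zero => simp
  | succ k ih =>
    intro hk
    rw [ih (by omega)]
    have ht1 : T - k = (T - (k+1)) + 1 := by omega
    have hcast : ((T - (k+1) : ℕ):ℝ) + 1 = ((T - k : ℕ):ℝ) := by
      have : T - (k+1) + 1 = T - k := by omega
      exact_mod_cast congrArg (Nat.cast : ℕ → ℝ) this
    have hstep : ∑ j ∈ Finset.univ.filter (fun j : Fin (n+1) => n - k ≤ (j:ℕ)),
        muSeq n T ν (T - k) j
        = (((T - k : ℕ):ℝ)/(T:ℝ)) *
          ∑ i ∈ Finset.univ.filter (fun i : Fin (n+1) => n - (k+1) ≤ (i:ℕ)), muSeq n T ν (T - (k+1)) i := by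
      rw [ht1, muSeq_succ, aux_step n _ (n - k) (by omega) (by omega), hcast]
      congr 1
      · rw [← ht1]
      · apply Finset.sum_congr _ (fun _ _ => rfl)
        apply Finset.filter_congr
        intro i _
        constructor <;> intro <;> omega
    rw [hstep, Finset.prod_range_succ]
    ring

lemma aux_tv_delta (n : ℕ) (μ : Fin (n+1) → ℝ) (h : IsProbDist μ) :
    tvDist μ (exDelta n) = 1 - μ (Fin.last n) := by
  obtain ⟨hpos, hsum⟩ := h
  have hsplit : μ (Fin.last n) + ∑ x ∈ Finset.univ.erase (Fin.last n), μ x = 1 := by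
    rw [Finset.add_sum_erase _ _ (Finset.mem_univ _)]; exact hsum
  have herase : 0 ≤ ∑ x ∈ Finset.univ.erase (Fin.last n), μ x :=
    Finset.sum_nonneg (fun x _ => hpos x)
  unfold tvDist
  rw [← Finset.add_sum_erase _ _ (Finset.mem_univ (Fin.last n))]
  have hd1 : exDelta n (Fin.last n) = 1 := by simp [exDelta]
  have hd0 : ∀ x ∈ Finset.univ.erase (Fin.last n), exDelta n x = 0 := by
    intro x hx
    have : x ≠ Fin.last n := (Finset.mem_erase.mp hx).1
    have : (x:ℕ) ≠ n := by
      intro hh; exact this (by simp [Fin.ext_iff, hh])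
    simp [exDelta, this]
  rw [hd1]
  have : ∑ x ∈ Finset.univ.erase (Fin.last n), |μ x - exDelta n x|
      = ∑ x ∈ Finset.univ.erase (Fin.last n), μ x := by
    apply Finset.sum_congr rfl
    intro x hx
    rw [hd0 x hx, sub_zero, abs_of_nonneg (hpos x)]
  rw [this, abs_of_nonpos (by linarith)]
  linarith

lemma aux_fact_prod (T : ℕ) : ∀ n, n ≤ T →
    Nat.factorial (T - n) * ∏ k ∈ Finset.range n, (T - k) = Nat.factorial T := by
  intro n
  induction n with
  | zero => simp
  | succ n ih =>
    intro h
    rw [Finset.prod_range_succ]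
    have h1 : T - n = (T - (n+1)) + 1 := by omega
    have h2 : Nat.factorial (T - (n+1)) * (T - n) = Nat.factorial (T - n) := by
      rw [h1, Nat.factorial_succ]; ring
    calc Nat.factorial (T - (n+1)) * ((∏ k ∈ Finset.range n, (T - k)) * (T - n))
        = Nat.factorial (T - (n+1)) * (T - n) * ∏ k ∈ Finset.range n, (T - k) := by ring
      _ = Nat.factorial (T - n) * ∏ k ∈ Finset.range n, (T - k) := by rw [h2]
      _ = Nat.factorial T := ih (by omega)

/-- **Lower bound for the linear-interpolation example.**
For `P_s = (1-s) P_initial + s P_final` on `{0,…,n}`, every starting distribution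
stays at total-variation distance at least `1 - T!/((T-n)! Tⁿ)` from `δ_n`. -/
theorem example_linear_lower_bound
    (n : ℕ) (hn : 1 ≤ n) (T : ℕ) (hT : n ≤ T)
    (ν : Fin (n + 1) → ℝ) (hν : IsProbDist ν) :
    tvDist (ν ᵥ* ((List.range T).map (fun j =>
        (1 - (j + 1 : ℝ) / (T : ℝ)) • exPinit n + ((j + 1 : ℝ) / (T : ℝ)) • exPfin n)).prod)
      (exDelta n)
    ≥ 1 - (Nat.factorial T : ℝ) / ((Nat.factorial (T - n) : ℝ) * (T : ℝ) ^ n) := by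
  have hT1 : 1 ≤ T := le_trans hn hT
  show tvDist (muSeq n T ν T) (exDelta n) ≥ _
  have hprobT : IsProbDist (muSeq n T ν T) := muSeq_probdist n T ν hν T le_rfl hT1
  have hprobTn : IsProbDist (muSeq n T ν (T - n)) := muSeq_probdist n T ν hν (T - n) (by omega) hT1
  rw [aux_tv_delta n _ hprobT]
  -- the mass at the top state
  have hfilt : Finset.univ.filter (fun j : Fin (n+1) => n ≤ (j:ℕ)) = {Fin.last n} := by
    ext j
    have := j.isLt
    simp only [Finset.mem_filter, Finset.mem_univ, true_and, Finset.mem_singleton, Fin.ext_iff,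
      Fin.val_last]
    omega
  have hmass : muSeq n T ν T (Fin.last n)
      = ∏ i ∈ Finset.range n, (((T - i : ℕ):ℝ)/(T:ℝ)) := by
    have h0 : ∑ j ∈ Finset.univ.filter (fun j : Fin (n+1) => n ≤ (j:ℕ)), muSeq n T ν T j
        = muSeq n T ν T (Fin.last n) := by
      rw [hfilt, Finset.sum_singleton]
    rw [← h0, aux_main_rec n T hT ν n le_rfl]
    have h1 : Finset.univ.filter (fun j : Fin (n+1) => n - n ≤ (j:ℕ)) = Finset.univ := by
      apply Finset.filter_true_of_mem; intro j _; omega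
    rw [h1, hprobTn.2, mul_one]
  rw [hmass]
  have hTpos : (0:ℝ) < (T:ℝ) := by exact_mod_cast hT1
  have hfact : ((Nat.factorial (T-n)):ℝ) * ((∏ k ∈ Finset.range n, (T-k) : ℕ):ℝ)
      = (Nat.factorial T : ℝ) := by
    exact_mod_cast aux_fact_prod T n hT
  have hprod : ∏ i ∈ Finset.range n, (((T - i : ℕ):ℝ)/(T:ℝ))
      = (Nat.factorial T : ℝ) / ((Nat.factorial (T - n) : ℝ) * (T : ℝ) ^ n) := by
    rw [Finset.prod_div_distrib, Finset.prod_const, Finset.card_range, ← Nat.cast_prod, ← hfact]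
    have hfne : ((Nat.factorial (T-n)):ℝ) ≠ 0 := by
      exact_mod_cast (Nat.factorial_pos (T-n)).ne'
    field_simp
  rw [hprod]
end

section
/- (Product estimate in the optimality example.) For all integers n and T with 2 ≤ n ≤ T, one has ∏_{j=T−n+1}^{T−1} (j/T) ≤ ((T − n/2)/T)^{n/2} ≤ e^{−n²/(4T)}. -/
open BigOperators Finset

/-- **Product estimate in the optimality example:**
for `2 ≤ n ≤ T`, `∏_{j=T-n+1}^{T-1} (j/T) ≤ ((T - n/2)/T)^{n/2} ≤ e^{-n²/(4T)}`. -/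
theorem example_product_estimate
    (n T : ℕ) (hn : 2 ≤ n) (hT : n ≤ T) :
    (∏ j ∈ Finset.Ico (T - n + 1) T, ((j : ℝ) / (T : ℝ)))
        ≤ (((T : ℝ) - (n : ℝ) / 2) / (T : ℝ)) ^ ((n : ℝ) / 2) ∧
      (((T : ℝ) - (n : ℝ) / 2) / (T : ℝ)) ^ ((n : ℝ) / 2)
        ≤ Real.exp (-(n : ℝ) ^ 2 / (4 * (T : ℝ))) := by
  have hnR : (2:ℝ) ≤ (n:ℝ) := by exact_mod_cast hn
  have hnT : (n:ℝ) ≤ (T:ℝ) := by exact_mod_cast hT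
  have hTpos : (0:ℝ) < T := by linarith
  set a : ℝ := ((T : ℝ) - (n : ℝ) / 2) / (T : ℝ) with ha
  have hapos : 0 < a := div_pos (by linarith) hTpos
  have ha1 : a ≤ 1 := by rw [ha, div_le_one hTpos]; linarith
  set m : ℕ := n - 1 with hm
  have hmR : (m:ℝ) = (n:ℝ) - 1 := by
    rw [hm, Nat.cast_sub (by omega)]; norm_num
  have hmpos : (0:ℝ) < m := by rw [hmR]; linarith
  have hcard : (Finset.Ico (T - n + 1) T).card = m := by
    rw [Nat.card_Ico]; omega
  have hbR : ((T - n + 1 : ℕ) : ℝ) = (T:ℝ) - n + 1 := by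
    push_cast [Nat.cast_sub hT]; ring
  have hsum : ∑ j ∈ Finset.Ico (T - n + 1) T, (j:ℝ) = (m:ℝ) * (2*T - n) / 2 := by
    have hrange : (∑ i ∈ Finset.range m, (i:ℝ)) = (m:ℝ) * ((m:ℝ) - 1) / 2 := by
      have h2 := Finset.sum_range_id_mul_two m
      have h2' : ((∑ i ∈ Finset.range m, i) * 2 : ℕ) = (m * (m-1) : ℕ) := h2
      have := congrArg (Nat.cast : ℕ → ℝ) h2'
      push_cast [Nat.cast_sub (by omega : 1 ≤ m)] at this
      linarith
    rw [Finset.sum_Ico_eq_sum_range]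
    have hk : T - (T - n + 1) = m := by omega
    rw [hk]
    push_cast [hbR]
    rw [Finset.sum_add_distrib, Finset.sum_const, hrange]
    simp only [nsmul_eq_mul, Finset.card_range]
    rw [hmR]; ring
  constructor
  · -- AM-GM
    have hz : ∀ j ∈ Finset.Ico (T - n + 1) T, (0:ℝ) ≤ (j:ℝ) / (T:ℝ) := by
      intro j _; positivity
    have hag := Real.geom_mean_le_arith_mean_weighted (Finset.Ico (T - n + 1) T)
      (fun _ => ((m:ℝ))⁻¹) (fun j => (j:ℝ) / (T:ℝ))
      (fun i _ => by positivity)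
      (by rw [Finset.sum_const, hcard, nsmul_eq_mul, mul_inv_cancel₀ hmpos.ne'])
      hz
    have hprod : ∏ j ∈ Finset.Ico (T - n + 1) T, ((j:ℝ)/(T:ℝ)) ^ ((m:ℝ))⁻¹
        = (∏ j ∈ Finset.Ico (T - n + 1) T, ((j:ℝ)/(T:ℝ))) ^ ((m:ℝ))⁻¹ := by
      rw [← Real.finset_prod_rpow _ _ hz]
    have hrhs : ∑ j ∈ Finset.Ico (T - n + 1) T, ((m:ℝ))⁻¹ * ((j:ℝ)/(T:ℝ)) = a := by
      rw [← Finset.mul_sum, ← Finset.sum_div, hsum, ha]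
      field_simp
    rw [hprod, hrhs] at hag
    have hP0 : 0 ≤ ∏ j ∈ Finset.Ico (T - n + 1) T, ((j:ℝ)/(T:ℝ)) :=
      Finset.prod_nonneg hz
    have h1 : (∏ j ∈ Finset.Ico (T - n + 1) T, ((j:ℝ)/(T:ℝ))) ≤ a ^ (m:ℝ) := by
      have := Real.rpow_le_rpow (Real.rpow_nonneg hP0 _) hag (le_of_lt hmpos)
      rwa [← Real.rpow_mul hP0, inv_mul_cancel₀ hmpos.ne', Real.rpow_one] at this
    refine h1.trans ?_
    exact Real.rpow_le_rpow_of_exponent_ge hapos ha1 (by rw [hmR]; linarith)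
  · have h1 : a ≤ Real.exp (-((n:ℝ)/(2*T))) := by
      have h2 := Real.add_one_le_exp (-((n:ℝ)/(2*T)))
      have h3 : a = 1 - (n:ℝ)/(2*T) := by rw [ha]; field_simp
      linarith
    calc a ^ ((n:ℝ)/2) ≤ (Real.exp (-((n:ℝ)/(2*T)))) ^ ((n:ℝ)/2) :=
          Real.rpow_le_rpow hapos.le h1 (by positivity)
      _ = Real.exp (-(n : ℝ) ^ 2 / (4 * (T : ℝ))) := by
          rw [← Real.exp_mul]
          congr 1
          field_simp
          ring
end

section
/- (Optimality of the T_ε = O(t_mix²/ε) bound: quadratic lower bound on the adiabatic time in the linear-interpolation example.) Let n ≥ 2, Ω = {0,1,…,n}, let P_initial be the matrix whose every row is the point mass at 0, let P_final satisfy (P_final)_{i,i+1} = 1 for 0 ≤ i ≤ n−1 and (P_final)_{n,n} = 1 (so π_f = δ_n), and set P_s = (1−s)P_initial + s P_final. Let ε ∈ (0,1) and let T ≥ n be an integer such that ‖ν P_{1/T} P_{2/T} ⋯ P_{(T−1)/T} P_1 − δ_n‖_TV ≤ ε for all probability distributions ν on Ω. Then T ≥ n² / (−4 log(1−ε)). 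-/
open Matrix BigOperators Finset

noncomputable def Pstep (n : ℕ) (s : ℝ) : Matrix (Fin (n + 1)) (Fin (n + 1)) ℝ :=
  (1 - s) • exPinit n + s • exPfin n

noncomputable def tailF (n k : ℕ) (μ : Fin (n + 1) → ℝ) : ℝ :=
  ∑ j ∈ Finset.univ.filter (fun j : Fin (n + 1) => k ≤ (j : ℕ)), μ j

lemma sum_ite_coe (n c : ℕ) (hc : c ≤ n) (a : ℝ) (S : Finset (Fin (n+1))) :
    ∑ j ∈ S, (if (j : ℕ) = c then a else 0)
      = if (⟨c, Nat.lt_succ_of_le hc⟩ : Fin (n+1)) ∈ S then a else 0 := by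
  rw [← Finset.sum_ite_eq' S (⟨c, Nat.lt_succ_of_le hc⟩ : Fin (n+1)) (fun _ => a)]
  apply Finset.sum_congr rfl
  intro j _
  congr 1
  simp [Fin.ext_iff]

lemma Pstep_rowsum (n : ℕ) (s : ℝ) (i : Fin (n+1)) : ∑ j, Pstep n s i j = 1 := by
  simp only [Pstep, Matrix.add_apply, Matrix.smul_apply, exPinit, exPfin, smul_eq_mul,
    Finset.sum_add_distrib, mul_ite, mul_one, mul_zero]
  have h1 : ∑ j : Fin (n+1), (if j = 0 then (1-s) else 0) = 1 - s := by
    simp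
  have h2 : ∑ j : Fin (n+1), (if (j:ℕ) = min ((i:ℕ)+1) n then s else 0) = s := by
    rw [sum_ite_coe n _ (min_le_right _ _) s Finset.univ]
    simp
  rw [h1, h2]; ring

lemma sum_preserve (n : ℕ) (s : ℝ) (μ : Fin (n+1) → ℝ) :
    ∑ j, (μ ᵥ* Pstep n s) j = ∑ i, μ i := by
  simp only [Matrix.vecMul, dotProduct]
  rw [Finset.sum_comm]
  apply Finset.sum_congr rfl
  intro i _
  rw [← Finset.mul_sum]
  rw [Pstep_rowsum n s i, mul_one]

lemma stepF (n k : ℕ) (s : ℝ) (μ : Fin (n+1) → ℝ) (hk1 : 1 ≤ k) (hkn : k ≤ n) :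
    tailF n k (μ ᵥ* Pstep n s) = s * tailF n (k-1) μ := by
  simp only [tailF, Matrix.vecMul, dotProduct]
  rw [Finset.sum_comm]
  have key : ∀ i : Fin (n+1),
      ∑ j ∈ Finset.univ.filter (fun j : Fin (n+1) => k ≤ (j:ℕ)), μ i * Pstep n s i j
      = μ i * (if k - 1 ≤ (i:ℕ) then s else 0) := by
    intro i
    rw [← Finset.mul_sum]
    congr 1
    simp only [Pstep, Matrix.add_apply, Matrix.smul_apply, exPinit, exPfin, smul_eq_mul,
      Finset.sum_add_distrib, mul_ite, mul_one, mul_zero]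
    have h1 : ∑ j ∈ Finset.univ.filter (fun j : Fin (n+1) => k ≤ (j:ℕ)),
        (if j = 0 then (1-s) else 0) = 0 := by
      apply Finset.sum_eq_zero
      intro j hj
      simp only [Finset.mem_filter] at hj
      rw [if_neg]
      intro h
      rw [h] at hj
      simp at hj
      omega
    have h2 : ∑ j ∈ Finset.univ.filter (fun j : Fin (n+1) => k ≤ (j:ℕ)),
        (if (j:ℕ) = min ((i:ℕ)+1) n then s else 0)
        = if k - 1 ≤ (i:ℕ) then s else 0 := by
      rw [sum_ite_coe n _ (min_le_right _ _) s]
      simp only [Finset.mem_filter, Finset.mem_univ, true_and]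
      congr 1
      simp only [eq_iff_iff]
      omega
    rw [h1, h2, zero_add]
  rw [Finset.sum_congr rfl (fun i _ => key i)]
  rw [Finset.mul_sum]
  rw [← Finset.sum_filter_add_sum_filter_not Finset.univ (fun i : Fin (n+1) => k - 1 ≤ (i:ℕ))]
  have : ∑ i ∈ Finset.univ.filter (fun i : Fin (n+1) => ¬ (k - 1 ≤ (i:ℕ))),
      μ i * (if k - 1 ≤ (i:ℕ) then s else 0) = 0 := by
    apply Finset.sum_eq_zero
    intro i hi
    simp only [Finset.mem_filter] at hi
    rw [if_neg hi.2, mul_zero]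
  rw [this, add_zero]
  apply Finset.sum_congr rfl
  intro i hi
  simp only [Finset.mem_filter] at hi
  rw [if_pos hi.2, mul_comm]

lemma prod_preserve (n : ℕ) (ν : Fin (n+1) → ℝ) :
    ∀ L : List ℝ, ∑ j, (ν ᵥ* (L.map (Pstep n)).prod) j = ∑ i, ν i := by
  intro L
  induction L using List.reverseRecOn with
  | nil => simp
  | append_singleton L s ih =>
    rw [List.map_append, List.prod_append, List.map_singleton, List.prod_singleton,
      ← Matrix.vecMul_vecMul, sum_preserve, ih]

lemma tailF_zero (n : ℕ) (μ : Fin (n+1) → ℝ) : tailF n 0 μ = ∑ i, μ i := by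
  simp [tailF]

lemma key_tail (n : ℕ) (ν : Fin (n+1) → ℝ) (hν : ∑ i, ν i = 1) :
    ∀ (L : List ℝ) (m : ℕ), m ≤ n → m ≤ L.length →
    tailF n m (ν ᵥ* (L.map (Pstep n)).prod) = (L.drop (L.length - m)).prod := by
  intro L
  induction L using List.reverseRecOn with
  | nil =>
    intro m hmn hml
    simp only [List.length_nil, Nat.le_zero] at hml
    subst hml
    simp [tailF_zero, hν]
  | append_singleton L s ih =>
    intro m hmn hml
    match m with
    | 0 =>
      rw [tailF_zero, prod_preserve n ν, hν]
      simp
    | m + 1 =>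
      rw [List.map_append, List.prod_append, List.map_singleton, List.prod_singleton,
        ← Matrix.vecMul_vecMul, stepF n (m+1) s _ (Nat.le_add_left 1 m) hmn]
      have hm : m ≤ L.length := by
        simp only [List.length_append, List.length_singleton] at hml
        omega
      rw [Nat.add_sub_cancel, ih m (le_trans (Nat.le_succ m) hmn) hm]
      have hlen : (L ++ [s]).length - (m+1) = L.length - m := by
        simp only [List.length_append, List.length_singleton]
        omega
      rw [hlen, List.drop_append]
      have h0 : L.length - m - L.length = 0 := by omega
      rw [h0]
      simp [mul_comm]

lemma range'_map_prod (f : ℕ → ℝ) : ∀ (k a : ℕ),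
    ((List.range' a k).map f).prod = ∏ j ∈ Finset.range k, f (a + j) := by
  intro k
  induction k with
  | zero => simp
  | succ k ih =>
    intro a
    rw [List.range'_succ, List.map_cons, List.prod_cons, ih (a+1), Finset.prod_range_succ']
    have h : ∀ j, a + 1 + j = a + (j + 1) := fun j => by omega
    simp only [h, Nat.add_zero]
    ring

lemma tailF_top (n : ℕ) (μ : Fin (n+1) → ℝ) : tailF n n μ = μ (Fin.last n) := by
  unfold tailF
  have h : Finset.univ.filter (fun j : Fin (n+1) => n ≤ (j:ℕ)) = {Fin.last n} := by
    ext j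
    have hj := j.isLt
    simp [Fin.ext_iff, Fin.last]
    omega
  rw [h, Finset.sum_singleton]

lemma myDropRange (k T : ℕ) (h : k ≤ T) : (List.range T).drop k = List.range' k (T-k) := by
  have heq : List.range T = List.range' 0 k ++ List.range' k (T-k) := by
    have := List.range'_append_1 (s := 0) (m := k) (n := T-k)
    simp only [Nat.zero_add] at this
    rw [this, List.range_eq_range']
    congr 1
    omega
  rw [heq]
  have hl : (List.range' 0 k).length = k := List.length_range' ..
  exact List.drop_left' hl

lemma tv_ge (n : ℕ) (μ : Fin (n+1) → ℝ) (hsum : ∑ i, μ i = 1) :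
    1 - μ (Fin.last n) ≤ tvDist μ (exDelta n) := by
  unfold tvDist
  have hmem : Fin.last n ∈ (Finset.univ : Finset (Fin (n+1))) := Finset.mem_univ _
  rw [← Finset.add_sum_erase Finset.univ _ hmem]
  have hδlast : exDelta n (Fin.last n) = 1 := by simp [exDelta, Fin.last]
  have hδ0 : ∀ x ∈ Finset.univ.erase (Fin.last n), exDelta n x = 0 := by
    intro x hx
    rw [Finset.mem_erase] at hx
    have hxlt := x.isLt
    simp only [exDelta, ite_eq_right_iff]
    intro hc
    exact absurd (Fin.ext hc : x = Fin.last n) hx.1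
  have hrest : |∑ x ∈ Finset.univ.erase (Fin.last n), μ x|
      ≤ ∑ x ∈ Finset.univ.erase (Fin.last n), |μ x - exDelta n x| := by
    calc |∑ x ∈ Finset.univ.erase (Fin.last n), μ x|
        ≤ ∑ x ∈ Finset.univ.erase (Fin.last n), |μ x| := Finset.abs_sum_le_sum_abs _ _
      _ = ∑ x ∈ Finset.univ.erase (Fin.last n), |μ x - exDelta n x| := by
          apply Finset.sum_congr rfl
          intro x hx
          rw [hδ0 x hx, sub_zero]
  have hsplit : μ (Fin.last n) + ∑ x ∈ Finset.univ.erase (Fin.last n), μ x = 1 := by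
    rw [Finset.add_sum_erase Finset.univ _ hmem, hsum]
  have h1 : |1 - μ (Fin.last n)| ≤ ∑ x ∈ Finset.univ.erase (Fin.last n), |μ x - exDelta n x| := by
    have : (1 : ℝ) - μ (Fin.last n) = ∑ x ∈ Finset.univ.erase (Fin.last n), μ x := by linarith
    rw [this]; exact hrest
  rw [hδlast]
  have h2 : 1 - μ (Fin.last n) ≤ |μ (Fin.last n) - 1| := by
    rw [abs_sub_comm]; exact le_abs_self _
  have h3 : 1 - μ (Fin.last n) ≤ |1 - μ (Fin.last n)| := le_abs_self _
  nlinarith [abs_nonneg (μ (Fin.last n) - 1), h1, h2]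


/-- **Optimality of the `T_ε = O(t_mix²/ε)` bound:** in the linear-interpolation
example on `{0,…,n}` (where `t_mix = n`), any adiabatic time `T` achieving accuracy
`ε` must satisfy `T ≥ n²/(-4 log(1-ε))`. -/
theorem example_quadratic_lower_bound
    (n : ℕ) (hn : 2 ≤ n) (ε : ℝ) (hε0 : 0 < ε) (hε1 : ε < 1)
    (T : ℕ) (hT : n ≤ T)
    (hadiab : ∀ ν : Fin (n + 1) → ℝ, IsProbDist ν →
      tvDist (ν ᵥ* ((List.range T).map (fun j =>
          (1 - (j + 1 : ℝ) / (T : ℝ)) • exPinit n + ((j + 1 : ℝ) / (T : ℝ)) • exPfin n)).prod)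
        (exDelta n) ≤ ε) :
    (T : ℝ) ≥ (n : ℝ) ^ 2 / (-4 * Real.log (1 - ε)) := by
  have hTpos : 0 < T := by omega
  have hTr : (0:ℝ) < (T:ℝ) := by exact_mod_cast hTpos
  set L0 : List ℝ := (List.range T).map (fun j : ℕ => ((j:ℝ)+1)/(T:ℝ)) with hL0
  have hmats : ((List.range T).map (fun a : ℕ => (a:ℝ))).map (fun j : ℝ =>
      (1 - (j + 1) / (T : ℝ)) • exPinit n + ((j + 1) / (T : ℝ)) • exPfin n)
      = L0.map (Pstep n) := by
    rw [List.map_map, hL0, List.map_map]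
    rfl
  have hsumν : ∑ i, exDelta n i = 1 := by
    unfold exDelta
    rw [sum_ite_coe n n le_rfl 1 Finset.univ]
    simp
  have hν : IsProbDist (exDelta n) := by
    constructor
    · intro i
      unfold exDelta
      split <;> norm_num
    · exact hsumν
  have hmain := hadiab (exDelta n) hν
  simp only [bind_pure_comp, List.map_eq_map] at hmain
  rw [hmats] at hmain
  set μ : Fin (n+1) → ℝ := (exDelta n) ᵥ* (L0.map (Pstep n)).prod with hμ
  have hμsum : ∑ j, μ j = 1 := by
    rw [hμ, prod_preserve n (exDelta n) L0, hsumν]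
  have hlen : L0.length = T := by simp [hL0]
  have hμn : μ (Fin.last n) = (L0.drop (T - n)).prod := by
    rw [← tailF_top n μ, hμ, key_tail n (exDelta n) hsumν L0 n le_rfl (by rw [hlen]; exact hT), hlen]
  have hdrop : L0.drop (T - n) = (List.range' (T-n) n).map (fun j : ℕ => ((j:ℝ)+1)/(T:ℝ)) := by
    rw [hL0, ← List.map_drop, myDropRange (T-n) T (Nat.sub_le T n), Nat.sub_sub_self hT]
  have hp : μ (Fin.last n) = ∏ j ∈ Finset.range n, (((T - n + j : ℕ) : ℝ) + 1)/(T:ℝ) := by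
    rw [hμn, hdrop, range'_map_prod]
  have hfac : ∀ j ∈ Finset.range n, (0:ℝ) < (((T - n + j : ℕ) : ℝ) + 1)/(T:ℝ) := by
    intro j _
    apply div_pos _ hTr
    positivity
  -- TV chain
  have h1 : 1 - μ (Fin.last n) ≤ ε := le_trans (tv_ge n μ hμsum) hmain
  have hp1 : 1 - ε ≤ ∏ j ∈ Finset.range n, (((T - n + j : ℕ) : ℝ) + 1)/(T:ℝ) := by
    rw [← hp]; linarith
  have hεpos : (0:ℝ) < 1 - ε := by linarith
  have hlog1 : Real.log (1 - ε) ≤ Real.log (∏ j ∈ Finset.range n, (((T - n + j : ℕ) : ℝ) + 1)/(T:ℝ)) :=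
    Real.log_le_log hεpos hp1
  have hlogp : Real.log (∏ j ∈ Finset.range n, (((T - n + j : ℕ) : ℝ) + 1)/(T:ℝ))
      = ∑ j ∈ Finset.range n, Real.log ((((T - n + j : ℕ) : ℝ) + 1)/(T:ℝ)) :=
    Real.log_prod (fun j hj => ne_of_gt (hfac j hj))
  have hbound : ∀ j ∈ Finset.range n, Real.log ((((T - n + j : ℕ) : ℝ) + 1)/(T:ℝ))
      ≤ ((j:ℝ) + 1 - (n:ℝ))/(T:ℝ) := by
    intro j hj
    have h := Real.log_le_sub_one_of_pos (hfac j hj)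
    have hc : ((T - n + j : ℕ) : ℝ) = (T:ℝ) - (n:ℝ) + (j:ℝ) := by
      push_cast [Nat.cast_sub hT]
      ring
    rw [hc] at h ⊢
    calc Real.log (((T:ℝ) - (n:ℝ) + (j:ℝ) + 1)/(T:ℝ))
        ≤ ((T:ℝ) - (n:ℝ) + (j:ℝ) + 1)/(T:ℝ) - 1 := h
      _ = ((j:ℝ) + 1 - (n:ℝ))/(T:ℝ) := by
          field_simp
          ring
  have gauss : ∑ j ∈ Finset.range n, (j:ℝ) = (n:ℝ)*((n:ℝ)-1)/2 := by
    have h := Finset.sum_range_id_mul_two n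
    have h2 := congrArg (Nat.cast (R := ℝ)) h
    push_cast [Nat.cast_sub (by omega : 1 ≤ n)] at h2
    linarith
  have hsumbound : ∑ j ∈ Finset.range n, ((j:ℝ) + 1 - (n:ℝ))/(T:ℝ)
      = -((n:ℝ)*((n:ℝ)-1))/(2*(T:ℝ)) := by
    rw [← Finset.sum_div]
    have hs : ∑ j ∈ Finset.range n, ((j:ℝ) + 1 - (n:ℝ))
        = -((n:ℝ)*((n:ℝ)-1))/2 := by
      rw [Finset.sum_sub_distrib, Finset.sum_add_distrib, gauss]
      simp only [Finset.sum_const, Finset.card_range, nsmul_eq_mul, mul_one]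
      ring
    rw [hs, div_div]
  have hfinal : Real.log (1 - ε) ≤ -((n:ℝ)*((n:ℝ)-1))/(2*(T:ℝ)) := by
    calc Real.log (1 - ε) ≤ _ := hlog1
      _ = ∑ j ∈ Finset.range n, Real.log ((((T - n + j : ℕ) : ℝ) + 1)/(T:ℝ)) := hlogp
      _ ≤ ∑ j ∈ Finset.range n, ((j:ℝ) + 1 - (n:ℝ))/(T:ℝ) := Finset.sum_le_sum hbound
      _ = -((n:ℝ)*((n:ℝ)-1))/(2*(T:ℝ)) := hsumbound
  have hlogneg : Real.log (1 - ε) < 0 := Real.log_neg hεpos (by linarith)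
  have hden : (0:ℝ) < -4 * Real.log (1-ε) := by linarith
  rw [ge_iff_le, div_le_iff₀ hden]
  have hnr : (2:ℝ) ≤ (n:ℝ) := by exact_mod_cast hn
  have h2T : (0:ℝ) < 2*(T:ℝ) := by linarith
  rw [neg_div, le_neg] at hfinal
  rw [div_le_iff₀ h2T] at hfinal
  -- hfinal : n*(n-1) ≤ -log(1-ε) * (2*T)
  nlinarith [hfinal, hnr, hTr, hlogneg]
end

section
/- (Lower bound for the example with a general schedule φ.) Let n ≥ 1, Ω = {0,1,…,n}, let P_initial be the matrix whose every row is the point mass at 0, let P_final satisfy (P_final)_{i,i+1} = 1 for 0 ≤ i ≤ n−1 and (P_final)_{n,n} = 1 (so π_f = δ_n). Let φ : [0,1] → [0,1] be continuous with φ(0)=0 and φ(1)=1, and for s ∈ [0,1] set P_s = (1−φ(s)) P_initial + φ(s) P_final. Then for every integer T ≥ n and every probability distribution ν on Ω, ‖ν P_{1/T} P_{2/T} ⋯ P_{(T−1)/T} P_1 − δ_n‖_TV ≥ 1 − ∏_{j=T−n+1}^{T} φ(j/T). -/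
open Matrix BigOperators Finset

noncomputable def exS (n k : ℕ) (μ : Fin (n+1) → ℝ) : ℝ :=
  ∑ j : Fin (n+1), if n - k ≤ (j:ℕ) then μ j else 0

lemma exS_step (n k : ℕ) (hk : k < n) (c : ℝ) (μ : Fin (n+1) → ℝ) :
    exS n k (μ ᵥ* ((1 - c) • exPinit n + c • exPfin n)) = c * exS n (k+1) μ := by
  unfold exS
  have hL : ∀ j : Fin (n+1),
      (μ ᵥ* ((1 - c) • exPinit n + c • exPfin n)) j
        = ∑ i : Fin (n+1), μ i * ((1-c) * (if j = 0 then 1 else 0)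
            + c * (if (j:ℕ) = min ((i:ℕ)+1) n then 1 else 0)) := by
    intro j
    simp [Matrix.vecMul, dotProduct, exPinit, exPfin, mul_comm]
  calc (∑ j : Fin (n+1), if n - k ≤ (j:ℕ) then
          (μ ᵥ* ((1 - c) • exPinit n + c • exPfin n)) j else 0)
      = ∑ j : Fin (n+1), ∑ i : Fin (n+1),
          (if n - k ≤ (j:ℕ) then μ i * ((1-c) * (if j = 0 then 1 else 0)
            + c * (if (j:ℕ) = min ((i:ℕ)+1) n then 1 else 0)) else 0) := by
        refine Finset.sum_congr rfl fun j _ => ?_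
        rw [hL]
        split_ifs <;> simp
    _ = ∑ i : Fin (n+1), ∑ j : Fin (n+1),
          (if n - k ≤ (j:ℕ) then μ i * ((1-c) * (if j = 0 then 1 else 0)
            + c * (if (j:ℕ) = min ((i:ℕ)+1) n then 1 else 0)) else 0) :=
        Finset.sum_comm
    _ = ∑ i : Fin (n+1), (if n - (k+1) ≤ (i:ℕ) then c * μ i else 0) := by
        refine Finset.sum_congr rfl fun i _ => ?_
        have hj0 : (min ((i:ℕ)+1) n) < n + 1 := by omega
        set j0 : Fin (n+1) := ⟨min ((i:ℕ)+1) n, hj0⟩ with hj0def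
        have : ∀ j : Fin (n+1),
            (if n - k ≤ (j:ℕ) then μ i * ((1-c) * (if j = 0 then 1 else 0)
              + c * (if (j:ℕ) = min ((i:ℕ)+1) n then 1 else 0)) else 0)
            = (if j = j0 then (if n - (k+1) ≤ (i:ℕ) then c * μ i else 0) else 0) := by
          intro j
          have hje : (j = j0) ↔ ((j:ℕ) = min ((i:ℕ)+1) n) := by
            constructor
            · intro h; rw [h]
            · intro h; exact Fin.ext h
          have hj0ne : j0 ≠ 0 := by
            intro h
            have : (j0 : ℕ) = 0 := by rw [h]; rfl
            simp [hj0def] at this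
            omega
          by_cases hjj : j = j0
          · subst hjj
            have h1 : ((j0:ℕ) = min ((i:ℕ)+1) n) := rfl
            have h2 : (n - k ≤ (j0:ℕ)) ↔ (n - (k+1) ≤ (i:ℕ)) := by
              rw [h1]; omega
            simp only [if_pos rfl, if_neg hj0ne, if_pos h1]
            split_ifs with ha hb hb
            · ring
            · exact absurd (h2.mp ha) hb
            · exact absurd (h2.mpr hb) ha
            · rfl
          · have hne : ¬ ((j:ℕ) = min ((i:ℕ)+1) n) := fun h => hjj (hje.mpr h)
            simp only [if_neg hjj, if_neg hne]
            split_ifs with ha hb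
            · exfalso
              have hz : (j:ℕ) = 0 := by
                rw [hb]; simp
              omega
            · simp
            · rfl
        rw [Finset.sum_congr rfl (fun j _ => this j)]
        simp [Finset.sum_ite_eq']
    _ = c * ∑ j : Fin (n+1), (if n - (k+1) ≤ (j:ℕ) then μ j else 0) := by
        rw [Finset.mul_sum]
        refine Finset.sum_congr rfl fun i _ => ?_
        split_ifs <;> ring

lemma sum_vecMul_ex (n : ℕ) (c : ℝ) (μ : Fin (n+1) → ℝ) :
    ∑ j, (μ ᵥ* ((1 - c) • exPinit n + c • exPfin n)) j = ∑ j, μ j := by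
  have hL : ∀ j : Fin (n+1),
      (μ ᵥ* ((1 - c) • exPinit n + c • exPfin n)) j
        = ∑ i : Fin (n+1), μ i * ((1-c) * (if j = 0 then 1 else 0)
            + c * (if (j:ℕ) = min ((i:ℕ)+1) n then 1 else 0)) := by
    intro j
    simp [Matrix.vecMul, dotProduct, exPinit, exPfin, mul_comm]
  rw [Finset.sum_congr rfl (fun j _ => hL j), Finset.sum_comm]
  refine Finset.sum_congr rfl fun i _ => ?_
  have hj0 : (min ((i:ℕ)+1) n) < n + 1 := by omega
  set j0 : Fin (n+1) := ⟨min ((i:ℕ)+1) n, hj0⟩ with hj0def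
  have hrw : ∀ j : Fin (n+1), (if (j:ℕ) = min ((i:ℕ)+1) n then (1:ℝ) else 0)
      = (if j = j0 then (1:ℝ) else 0) := by
    intro j
    congr 1
    simp [Fin.ext_iff, hj0def]
  simp only [mul_add, hrw]
  rw [Finset.sum_add_distrib]
  have h1 : ∑ j : Fin (n+1), μ i * ((1-c) * (if j = 0 then (1:ℝ) else 0))
      = μ i * (1-c) := by
    simp [Finset.mul_sum, Finset.sum_ite_eq']
  have h2 : ∑ j : Fin (n+1), μ i * (c * (if j = j0 then (1:ℝ) else 0))
      = μ i * c := by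
    simp [Finset.mul_sum, Finset.sum_ite_eq']
  rw [h1, h2]
  ring

/-- **Lower bound for the example with a general schedule `φ`:**
for `P_s = (1 - φ(s)) P_initial + φ(s) P_final` on `{0,…,n}`, every starting
distribution stays at total-variation distance at least
`1 - ∏_{j=T-n+1}^{T} φ(j/T)` from `δ_n`. -/
theorem example_schedule_lower_bound
    (n : ℕ) (hn : 1 ≤ n)
    (φ : ℝ → ℝ) (hcont : ContinuousOn φ (Set.Icc 0 1))
    (h0 : φ 0 = 0) (h1 : φ 1 = 1)
    (hrange : ∀ s ∈ Set.Icc (0:ℝ) 1, φ s ∈ Set.Icc (0:ℝ) 1)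
    (T : ℕ) (hT : n ≤ T)
    (ν : Fin (n + 1) → ℝ) (hν : IsProbDist ν) :
    tvDist (ν ᵥ* ((List.range T).map (fun j =>
        (1 - φ ((j + 1 : ℝ) / (T : ℝ))) • exPinit n
          + φ ((j + 1 : ℝ) / (T : ℝ)) • exPfin n)).prod)
      (exDelta n)
    ≥ 1 - ∏ j ∈ Finset.Icc (T - n + 1) T, φ ((j : ℝ) / (T : ℝ)) := by
  have hgoal : (ν ᵥ* ((List.range T).map (fun j =>
        (1 - φ ((j + 1 : ℝ) / (T : ℝ))) • exPinit n
          + φ ((j + 1 : ℝ) / (T : ℝ)) • exPfin n)).prod)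
      = ν ᵥ* ((List.range T).map (fun j : ℕ =>
        (1 - φ (((j:ℝ) + 1) / (T : ℝ))) • exPinit n
          + φ (((j:ℝ) + 1) / (T : ℝ)) • exPfin n)).prod := by
    congr 1
    simp only [bind_pure_comp, List.map_eq_map, List.map_map]
    rfl
  rw [hgoal]
  set M : ℕ → Matrix (Fin (n+1)) (Fin (n+1)) ℝ := fun j : ℕ =>
      (1 - φ (((j:ℝ) + 1) / (T : ℝ))) • exPinit n
        + φ (((j:ℝ) + 1) / (T : ℝ)) • exPfin n with hM
  set μfun : ℕ → Fin (n+1) → ℝ := fun t => ν ᵥ* ((List.range t).map M).prod with hμ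
  have hrec : ∀ t, μfun (t+1) = (μfun t) ᵥ* M t := by
    intro t
    simp [hμ, List.range_succ, Matrix.vecMul_vecMul]
  have hsum : ∀ t, ∑ j, μfun t j = 1 := by
    intro t
    induction t with
    | zero => simpa [hμ] using hν.2
    | succ t ih =>
      rw [hrec t]
      rw [show M t = (1 - φ (((t:ℕ) + 1 : ℝ) / (T : ℝ))) • exPinit n
          + φ (((t:ℕ) + 1 : ℝ) / (T : ℝ)) • exPfin n from rfl]
      rw [sum_vecMul_ex]
      exact ih
  have key : ∀ k, k ≤ n → exS n 0 (μfun T)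
      = (∏ j ∈ Finset.Icc (T - k + 1) T, φ ((j : ℝ) / (T : ℝ))) * exS n k (μfun (T - k)) := by
    intro k
    induction k with
    | zero =>
      intro _
      have : Finset.Icc (T - 0 + 1) T = ∅ := by
        apply Finset.Icc_eq_empty
        omega
      simp [this]
    | succ k ih =>
      intro hk
      have hk' : k ≤ n := by omega
      have hkn : k < n := by omega
      have hT1 : (T - (k+1)) + 1 = T - k := by omega
      have hstep : μfun (T - k) = μfun (T - (k+1)) ᵥ* M (T - (k+1)) := by
        rw [← hT1, hrec]
      have hcast : ((T - (k+1) : ℕ) : ℝ) + 1 = ((T - k : ℕ) : ℝ) := by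
        rw [← hT1]; push_cast; ring
      have hS : exS n k (μfun (T - k))
          = φ (((T - k : ℕ) : ℝ) / (T : ℝ)) * exS n (k+1) (μfun (T - (k+1))) := by
        rw [hstep]
        rw [show M (T - (k+1)) = (1 - φ ((((T - (k+1) : ℕ) : ℝ) + 1) / (T : ℝ))) • exPinit n
            + φ ((((T - (k+1) : ℕ) : ℝ) + 1) / (T : ℝ)) • exPfin n from rfl]
        rw [hcast]
        exact exS_step n k hkn _ _
      have hicc : Finset.Icc (T - (k+1) + 1) T = insert (T - k) (Finset.Icc (T - k + 1) T) := by
        ext x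
        simp only [Finset.mem_Icc, Finset.mem_insert]
        omega
      rw [hicc, Finset.prod_insert (by simp only [Finset.mem_Icc]; omega)]
      rw [ih hk', hS]
      ring
  have hfinal : exS n 0 (μfun T)
      = ∏ j ∈ Finset.Icc (T - n + 1) T, φ ((j : ℝ) / (T : ℝ)) := by
    rw [key n le_rfl]
    have hSn : exS n n (μfun (T - n)) = 1 := by
      unfold exS
      rw [Finset.sum_congr rfl (fun j _ => by rw [if_pos (by omega : n - n ≤ (j:ℕ))])]
      exact hsum (T - n)
    rw [hSn, mul_one]
  have htop : exS n 0 (μfun T) = μfun T (Fin.last n) := by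
    unfold exS
    rw [Finset.sum_eq_single (Fin.last n)]
    · rw [if_pos]; simp [Fin.last]
    · intro j _ hj
      rw [if_neg]
      have hjlt := j.isLt
      have : (j : ℕ) ≠ n := by
        intro h
        exact hj (Fin.ext (by simp [Fin.last, h]))
      omega
    · simp
  set p : ℝ := μfun T (Fin.last n) with hp
  have hprod : p = ∏ j ∈ Finset.Icc (T - n + 1) T, φ ((j : ℝ) / (T : ℝ)) :=
    htop.symm.trans hfinal
  show tvDist (μfun T) (exDelta n) ≥ _
  rw [← hprod]
  unfold tvDist
  have hdelta0 : ∀ x : Fin (n+1), x ≠ Fin.last n → exDelta n x = 0 := by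
    intro x hx
    unfold exDelta
    rw [if_neg]
    intro h
    exact hx (Fin.ext (by simp [Fin.last, h]))
  have hsplit : ∑ x, |μfun T x - exDelta n x|
      = |p - 1| + ∑ x ∈ Finset.univ.erase (Fin.last n), |μfun T x| := by
    rw [← Finset.add_sum_erase Finset.univ _ (Finset.mem_univ (Fin.last n))]
    congr 1
    · unfold exDelta
      rw [if_pos (by simp [Fin.last])]
    · exact Finset.sum_congr rfl fun x hx => by
        rw [hdelta0 x (Finset.ne_of_mem_erase hx), sub_zero]
  have herase : ∑ x ∈ Finset.univ.erase (Fin.last n), μfun T x = 1 - p := by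
    have := Finset.add_sum_erase Finset.univ (μfun T) (Finset.mem_univ (Fin.last n))
    have h2 := hsum T
    linarith [this, h2]
  have habs : |∑ x ∈ Finset.univ.erase (Fin.last n), μfun T x|
      ≤ ∑ x ∈ Finset.univ.erase (Fin.last n), |μfun T x| :=
    Finset.abs_sum_le_sum_abs _ _
  rw [herase] at habs
  have h1p : 1 - p ≤ |1 - p| := le_abs_self _
  have h1p' : 1 - p ≤ |p - 1| := by rw [abs_sub_comm]; exact h1p
  rw [hsplit]
  linarith
end

section
/- (Optimality of the bound in the Discrete Adiabatic Theorem.) Let m ≥ 1 be an integer and let φ : [0,1] → [0,1] be continuous with φ(0)=0, φ(1)=1, (m+1) times continuously differentiable in a neighborhood of 1, with φ^{(k)}(1)=0 for 1 ≤ k < m and φ^{(m)}(1) ≠ 0. For each n ≥ 1 consider Ω = {0,1,…,n}, P_initial the matrix whose every row is the point mass at 0, P_final the matrix with (P_final)_{i,i+1} = 1 for 0 ≤ i ≤ n−1 and (P_final)_{n,n} = 1, and P_s = (1−φ(s)) P_initial + φ(s) P_final. Then there exist constants c > 0, n₀ ∈ ℕ and ε₀ ∈ (0,1), depending only on φ and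 m, such that for every n ≥ n₀, every ε ∈ (0, ε₀), and every integer T ≥ n: if ‖ν P_{1/T} P_{2/T} ⋯ P_{(T−1)/T} P_1 − δ_n‖_TV ≤ ε for all probability distributions ν on Ω, then T ≥ c · (n^{m+1}/ε)^{1/m}. -/
open Matrix BigOperators Finset

open Set

lemma step1 (m : ℕ) (hm : 1 ≤ m) (φ : ℝ → ℝ)
    (h1 : φ 1 = 1)
    (hrange : ∀ s ∈ Set.Icc (0:ℝ) 1, φ s ∈ Set.Icc (0:ℝ) 1)
    (hsmooth : ∃ δ > (0:ℝ), ContDiffOn ℝ (m + 1) φ (Set.Icc (1 - δ) 1) ∧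
      (∀ k : ℕ, 1 ≤ k → k < m → iteratedDerivWithin k φ (Set.Icc (1 - δ) 1) 1 = 0) ∧
      iteratedDerivWithin m φ (Set.Icc (1 - δ) 1) 1 ≠ 0) :
    ∃ a > (0:ℝ), ∃ δ₁ : ℝ, 0 < δ₁ ∧ δ₁ ≤ 1 ∧
      ∀ x ∈ Set.Icc (1 - δ₁) 1, 1 - φ x ≥ a * (1 - x) ^ m := by
  obtain ⟨δ, hδ, hC, hk0, hDm⟩ := hsmooth
  set s : Set ℝ := Set.Icc (1 - δ) 1 with hs
  have hsub : (1:ℝ) - δ < 1 := by linarith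
  have huniq : UniqueDiffOn ℝ s := uniqueDiffOn_Icc hsub
  set D : ℕ → ℝ → ℝ := fun k => iteratedDerivWithin k φ s with hD
  have hdiff : ∀ k : ℕ, k ≤ m → DifferentiableOn ℝ (D k) s := by
    intro k hk
    exact hC.differentiableOn_iteratedDerivWithin (by exact_mod_cast Nat.lt_succ_of_le hk) huniq
  have hcontD : ∀ k : ℕ, k ≤ m → ContinuousOn (D k) s := fun k hk => (hdiff k hk).continuousOn
  have hderivAt : ∀ k : ℕ, k < m → ∀ x ∈ interior s, HasDerivAt (D k) (D (k+1) x) x := by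
    intro k hk x hx
    have hmem : s ∈ nhds x := mem_interior_iff_mem_nhds.mp hx
    have h1' : DifferentiableAt ℝ (D k) x := (hdiff k hk.le x (interior_subset hx)).differentiableAt hmem
    have h2' : derivWithin (D k) s x = deriv (D k) x := derivWithin_of_mem_nhds hmem
    have h3' : D (k+1) x = derivWithin (D k) s x :=
      congrFun iteratedDerivWithin_succ x
    rw [h3', h2']
    exact h1'.hasDerivAt
  set b : ℝ := |D m 1| / 2 with hb
  have habs : 0 < |D m 1| := abs_pos.mpr hDm
  have hb0 : 0 < b := by positivity
  have h1s : (1:ℝ) ∈ s := by constructor <;> linarith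
  -- δ₂ from continuity of D m at 1
  have hcont1 : ContinuousWithinAt (D m) s 1 := (hcontD m le_rfl) 1 h1s
  rw [Metric.continuousWithinAt_iff] at hcont1
  obtain ⟨η, hη, hball⟩ := hcont1 b hb0
  set δ₂ : ℝ := min (min δ 1) (η/2) with hδ₂
  have hδ₂0 : 0 < δ₂ := by
    apply lt_min (lt_min hδ one_pos); positivity
  have hδ₂δ : δ₂ ≤ δ := le_trans (min_le_left _ _) (min_le_left _ _)
  have hδ₂1 : δ₂ ≤ 1 := le_trans (min_le_left _ _) (min_le_right _ _)
  have hδ₂η : δ₂ < η := lt_of_le_of_lt (min_le_right _ _) (by linarith)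
  set t : Set ℝ := Set.Icc (1-δ₂) 1 with ht
  have hts : t ⊆ s := Set.Icc_subset_Icc (by linarith) le_rfl
  have hconvt : Convex ℝ t := convex_Icc _ _
  have hintt : interior t = Set.Ioo (1-δ₂) 1 := interior_Icc
  have hintts : interior t ⊆ interior s := interior_mono hts
  set σ : ℝ := if 0 < D m 1 then 1 else -1 with hσdef
  have hσcases : σ = 1 ∨ σ = -1 := by
    rw [hσdef]; split <;> simp
  have hσabs : |σ| = 1 := by rcases hσcases with h | h <;> rw [h] <;> simp
  have hσDm1 : σ * D m 1 = |D m 1| := by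
    rw [hσdef]; split
    · rw [abs_of_pos ‹_›]; ring
    · rw [abs_of_nonpos (not_lt.mp ‹_›)]; ring
  have hbase : ∀ x ∈ t, b ≤ σ * D m x := by
    intro x hx
    have hxs : x ∈ s := hts hx
    obtain ⟨hx1, hx2⟩ := hx
    have hd : dist x 1 < η := by
      rw [Real.dist_eq, abs_lt]; constructor <;> linarith
    have hd2 : |D m x - D m 1| < b := by
      have := hball hxs hd; rwa [Real.dist_eq] at this
    have h2 : -(|D m x - D m 1|) ≤ σ * (D m x - D m 1) := by
      have h3 := neg_abs_le (σ * (D m x - D m 1))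
      rwa [abs_mul, hσabs, one_mul] at h3
    nlinarith [hσDm1]
  -- main downward induction via j = m - k
  have claim : ∀ j : ℕ, j ≤ m - 1 → ∀ x ∈ t,
      b * (1-x)^j / (j.factorial : ℝ) ≤ σ * (-1)^j * D (m - j) x := by
    intro j
    induction j with
    | zero =>
      intro _ x hx
      simpa using hbase x hx
    | succ j ih =>
      intro hj x hx
      have hj' : j ≤ m - 1 := Nat.le_of_succ_le hj
      have hjm : j + 1 ≤ m - 1 := hj
      have hIH := ih hj'
      -- the comparison function
      set g : ℝ → ℝ := fun y =>
        σ * (-1)^(j+1) * D (m - (j+1)) y - b * (1-y)^(j+1) / ((j+1).factorial : ℝ) with hg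
      have hmj1 : m - (j+1) + 1 = m - j := by omega
      have hmj2 : m - (j+1) < m := by omega
      have hmj3 : 1 ≤ m - (j+1) := by omega
      have hpoly : ∀ y : ℝ, HasDerivAt (fun z : ℝ => b * (1-z)^(j+1) / ((j+1).factorial : ℝ))
          (-(b * (1-y)^j / (j.factorial : ℝ))) y := by
        intro y
        have hp1 : HasDerivAt (fun z : ℝ => 1 - z) (-1) y := by
          simpa using (hasDerivAt_id y).const_sub 1
        have hp2 := ((hp1.pow (j+1)).const_mul b).div_const ((j+1).factorial : ℝ)
        refine hp2.congr_deriv ?_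
        symm
        have : ((j+1).factorial : ℝ) = (j+1) * (j.factorial : ℝ) := by
          rw [Nat.factorial_succ]; push_cast; ring
        rw [this]
        rw [Nat.add_sub_cancel]
        have hjf : (j.factorial : ℝ) ≠ 0 := by positivity
        field_simp
        push_cast
        ring
      have hgd : ∀ y ∈ interior t, HasDerivAt g
          (σ * (-1)^(j+1) * D (m - j) y + b * (1-y)^j / (j.factorial : ℝ)) y := by
        intro y hy
        have h1d := (hderivAt (m - (j+1)) hmj2 y (hintts hy)).const_mul (σ * (-1)^(j+1))
        rw [hmj1] at h1d
        have := h1d.sub (hpoly y)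
        refine this.congr_deriv ?_
        ring
      have hderiv_nonpos : ∀ y ∈ interior t, deriv g y ≤ 0 := by
        intro y hy
        rw [(hgd y hy).deriv]
        have hyt : y ∈ t := interior_subset hy
        have hIHy := hIH y hyt
        have : σ * (-1)^(j+1) * D (m - j) y = -(σ * (-1)^j * D (m - j) y) := by ring
        rw [this]
        linarith
      have hcontg : ContinuousOn g t := by
        apply ContinuousOn.sub
        · exact continuousOn_const.mul ((hcontD (m - (j+1)) hmj2.le).mono hts)
        · fun_prop
      have hdiffg : DifferentiableOn ℝ g (interior t) := fun y hy =>
        ((hgd y hy).differentiableAt).differentiableWithinAt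
      have hanti : AntitoneOn g t := antitoneOn_of_deriv_nonpos hconvt hcontg hdiffg hderiv_nonpos
      have h1t : (1:ℝ) ∈ t := by constructor <;> linarith
      have hg1 : g 1 = 0 := by
        have hz : D (m - (j+1)) 1 = 0 := hk0 _ hmj3 hmj2
        simp [hg, hz]
      have hle := hanti hx h1t hx.2
      rw [hg1] at hle
      simp only [hg] at hle
      linarith [hle]
  -- final step: integrate once more to φ itself
  have hfin : ∀ x ∈ t, b * (1-x)^m / (m.factorial : ℝ) ≤ σ * (-1)^m * (φ x - 1) := by
    intro x hx
    have hclaim := claim (m-1) le_rfl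
    have hm1 : m - 1 + 1 = m := by omega
    set H : ℝ → ℝ := fun y => σ * (-1)^m * φ y - b * (1-y)^m / (m.factorial : ℝ) with hH
    have hpoly : ∀ y : ℝ, HasDerivAt (fun z : ℝ => b * (1-z)^m / (m.factorial : ℝ))
        (-(b * (1-y)^(m-1) / ((m-1).factorial : ℝ))) y := by
      intro y
      have hp1 : HasDerivAt (fun z : ℝ => 1 - z) (-1) y := by
        simpa using (hasDerivAt_id y).const_sub 1
      have hp2 := ((hp1.pow m).const_mul b).div_const (m.factorial : ℝ)
      refine hp2.congr_deriv ?_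
      symm
      have hfac : (m.factorial : ℝ) = m * ((m-1).factorial : ℝ) := by
        conv_lhs => rw [← hm1]
        rw [Nat.factorial_succ, hm1]; push_cast; ring
      rw [hfac]
      have hjf : ((m-1).factorial : ℝ) ≠ 0 := by positivity
      have hmne : (m:ℝ) ≠ 0 := by positivity
      field_simp
    have hφD0 : ∀ y ∈ interior t, HasDerivAt φ (D 1 y) y := by
      intro y hy
      have := hderivAt 0 hm y (hintts hy)
      have hD0 : D 0 = φ := by
        funext z; simp [hD]
      rwa [hD0] at this
    have hHd : ∀ y ∈ interior t, HasDerivAt H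
        (σ * (-1)^m * D 1 y + b * (1-y)^(m-1) / ((m-1).factorial : ℝ)) y := by
      intro y hy
      have h1d := (hφD0 y hy).const_mul (σ * (-1)^m)
      have := h1d.sub (hpoly y)
      refine this.congr_deriv ?_
      ring
    have hderiv_nonpos : ∀ y ∈ interior t, deriv H y ≤ 0 := by
      intro y hy
      rw [(hHd y hy).deriv]
      have hyt : y ∈ t := interior_subset hy
      have hIHy := hclaim y hyt
      have hmm1 : m - (m-1) = 1 := by omega
      rw [hmm1] at hIHy
      have hsign : σ * (-1)^m * D 1 y = -(σ * (-1)^(m-1) * D 1 y) := by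
        have : (-1:ℝ)^m = -(-1:ℝ)^(m-1) := by
          conv_lhs => rw [← hm1]
          rw [pow_succ]; ring
        rw [this]; ring
      rw [hsign]
      linarith
    have hcontH : ContinuousOn H t := by
      apply ContinuousOn.sub
      · have hD0 : D 0 = φ := by funext z; simp [hD]
        have hc0 := (hcontD 0 (by omega)).mono hts
        rw [hD0] at hc0
        exact continuousOn_const.mul hc0
      · fun_prop
    have hdiffH : DifferentiableOn ℝ H (interior t) := fun y hy =>
      ((hHd y hy).differentiableAt).differentiableWithinAt
    have hanti : AntitoneOn H t := antitoneOn_of_deriv_nonpos hconvt hcontH hdiffH hderiv_nonpos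
    have h1t : (1:ℝ) ∈ t := by constructor <;> linarith
    have hH1 : H 1 = σ * (-1)^m := by
      simp [hH, h1, sub_self, zero_pow (by omega : m ≠ 0)]
    have hle := hanti hx h1t hx.2
    rw [hH1] at hle
    simp only [hH] at hle
    linarith
  -- determine the sign
  set e : ℝ := σ * (-1)^(m+1) with he
  have hfin' : ∀ x ∈ t, b * (1-x)^m / (m.factorial : ℝ) ≤ e * (1 - φ x) := by
    intro x hx
    have h₁ := hfin x hx
    have h₂ : e * (1 - φ x) = σ * (-1)^m * (φ x - 1) := by rw [he, pow_succ]; ring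
    linarith [h₂.ge, h₂.le]
  have hecases : e = 1 ∨ e = -1 := by
    have hpow : ((-1:ℝ))^(m+1) = 1 ∨ ((-1:ℝ))^(m+1) = -1 := neg_one_pow_eq_or ℝ (m+1)
    rcases hσcases with h | h <;> rcases hpow with hp | hp <;>
      simp [he, h, hp]
  have hx0t : (1 - δ₂ : ℝ) ∈ t := ⟨le_rfl, by linarith⟩
  have hφx0 := hrange (1-δ₂) ⟨by linarith, by linarith⟩
  have he1 : e = 1 := by
    rcases hecases with h | h
    · exact h
    · exfalso
      have h₁ := hfin' _ hx0t
      rw [h] at h₁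
      have h₂ : (1:ℝ) - (1-δ₂) = δ₂ := by ring
      rw [h₂] at h₁
      have h₃ : 0 < b * δ₂^m / (m.factorial : ℝ) := by positivity
      have h₄ : φ (1-δ₂) ≤ 1 := hφx0.2
      nlinarith
  refine ⟨b / (m.factorial : ℝ), by positivity, δ₂, hδ₂0, hδ₂1, ?_⟩
  intro x hx
  have h₁ := hfin' x hx
  rw [he1, one_mul] at h₁
  have h₂ : b * (1-x)^m / (m.factorial : ℝ) = b / (m.factorial : ℝ) * (1-x)^m := by ring
  linarith [h₂.ge, h₂.le]


noncomputable def adQ (n : ℕ) (p : ℝ) : Matrix (Fin (n + 1)) (Fin (n + 1)) ℝ :=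
  (1 - p) • exPinit n + p • exPfin n

noncomputable def topsum (n r : ℕ) (ρ : Fin (n + 1) → ℝ) : ℝ :=
  ∑ j ∈ Finset.univ.filter (fun j : Fin (n + 1) => n ≤ (j : ℕ) + r), ρ j

lemma adQ_apply (n : ℕ) (p : ℝ) (i j : Fin (n + 1)) :
    adQ n p i j = (1 - p) * (if j = 0 then 1 else 0)
      + p * (if (j : ℕ) = min ((i : ℕ) + 1) n then 1 else 0) := by
  simp [adQ, exPinit, exPfin, Matrix.add_apply, Matrix.smul_apply, smul_eq_mul]

lemma vecMul_apply {n : ℕ} (v : Fin (n+1) → ℝ) (M : Matrix (Fin (n+1)) (Fin (n+1)) ℝ)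
    (j : Fin (n+1)) : (v ᵥ* M) j = ∑ i, v i * M i j := by
  simp [Matrix.vecMul, dotProduct]

lemma adQ_row_sum (n : ℕ) (p : ℝ) (i : Fin (n + 1)) : ∑ j, adQ n p i j = 1 := by
  set j₀ : Fin (n + 1) := ⟨min ((i : ℕ) + 1) n, by omega⟩ with hj₀
  have h1 : ∀ j : Fin (n+1), ((j : ℕ) = min ((i : ℕ) + 1) n) ↔ j = j₀ := by
    intro j; rw [Fin.ext_iff]
  simp only [adQ_apply, h1]
  rw [Finset.sum_add_distrib, ← Finset.mul_sum, ← Finset.mul_sum,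
    Finset.sum_ite_eq' Finset.univ (0 : Fin (n+1)) (fun _ => (1:ℝ)),
    Finset.sum_ite_eq' Finset.univ j₀ (fun _ => (1:ℝ))]
  simp

lemma isProbDist_vecMul_adQ {n : ℕ} {p : ℝ} (hp0 : 0 ≤ p) (hp1 : p ≤ 1)
    {ρ : Fin (n+1) → ℝ} (hρ : IsProbDist ρ) : IsProbDist (ρ ᵥ* adQ n p) := by
  constructor
  · intro j
    rw [vecMul_apply]
    apply Finset.sum_nonneg
    intro i _
    apply mul_nonneg (hρ.1 i)
    rw [adQ_apply]
    have h1p : 0 ≤ 1 - p := by linarith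
    apply add_nonneg
    · apply mul_nonneg h1p; split <;> norm_num
    · apply mul_nonneg hp0; split <;> norm_num
  · calc ∑ j, (ρ ᵥ* adQ n p) j = ∑ j, ∑ i, ρ i * adQ n p i j := by
          simp [vecMul_apply]
      _ = ∑ i, ∑ j, ρ i * adQ n p i j := Finset.sum_comm
      _ = ∑ i, ρ i * ∑ j, adQ n p i j := by
          simp [Finset.mul_sum]
      _ = ∑ i, ρ i := by simp [adQ_row_sum]
      _ = 1 := hρ.2

lemma topsum_step {n r : ℕ} (hr : r < n) (p : ℝ) (ρ : Fin (n+1) → ℝ) :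
    topsum n r (ρ ᵥ* adQ n p) = p * topsum n (r+1) ρ := by
  unfold topsum
  calc ∑ j ∈ Finset.univ.filter (fun j : Fin (n + 1) => n ≤ (j : ℕ) + r), (ρ ᵥ* adQ n p) j
      = ∑ j ∈ Finset.univ.filter (fun j : Fin (n + 1) => n ≤ (j : ℕ) + r), ∑ i, ρ i * adQ n p i j := by
        apply Finset.sum_congr rfl; intro j _; rw [vecMul_apply]
    _ = ∑ i, ∑ j ∈ Finset.univ.filter (fun j : Fin (n + 1) => n ≤ (j : ℕ) + r), ρ i * adQ n p i j :=
        Finset.sum_comm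
    _ = ∑ i, ρ i * (p * (if n ≤ (i : ℕ) + (r + 1) then 1 else 0)) := by
        apply Finset.sum_congr rfl
        intro i _
        rw [← Finset.mul_sum]
        congr 1
        set j₀ : Fin (n + 1) := ⟨min ((i : ℕ) + 1) n, by omega⟩ with hj₀
        have h1 : ∀ j : Fin (n+1), ((j : ℕ) = min ((i : ℕ) + 1) n) ↔ j = j₀ := by
          intro j; rw [Fin.ext_iff]
        simp only [adQ_apply, h1]
        rw [Finset.sum_add_distrib, ← Finset.mul_sum, ← Finset.mul_sum,
          Finset.sum_ite_eq' _ (0 : Fin (n+1)) (fun _ => (1:ℝ)),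
          Finset.sum_ite_eq' _ j₀ (fun _ => (1:ℝ))]
        have h0 : (0 : Fin (n+1)) ∉ Finset.univ.filter (fun j : Fin (n + 1) => n ≤ (j : ℕ) + r) := by
          simp; omega
        have h2 : j₀ ∈ Finset.univ.filter (fun j : Fin (n + 1) => n ≤ (j : ℕ) + r)
            ↔ n ≤ (i : ℕ) + (r + 1) := by
          simp [hj₀]; omega
        rw [if_neg h0]
        by_cases hc : n ≤ (i : ℕ) + (r + 1)
        · rw [if_pos (h2.mpr hc), if_pos hc]; ring
        · rw [if_neg (fun h => hc (h2.mp h)), if_neg hc]; ring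
    _ = p * ∑ i ∈ Finset.univ.filter (fun i : Fin (n + 1) => n ≤ (i : ℕ) + (r + 1)), ρ i := by
        rw [Finset.sum_filter, Finset.mul_sum]
        apply Finset.sum_congr rfl
        intro i _
        by_cases hc : n ≤ (i : ℕ) + (r + 1) <;> simp [hc] <;> ring

lemma topsum_full {n : ℕ} {ρ : Fin (n+1) → ℝ} (hρ : IsProbDist ρ) : topsum n n ρ = 1 := by
  unfold topsum
  rw [Finset.filter_true_of_mem (fun j _ => by omega)]
  exact hρ.2

lemma topsum_zero (n : ℕ) (ρ : Fin (n+1) → ℝ) : topsum n 0 ρ = ρ (Fin.last n) := by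
  unfold topsum
  have h : Finset.univ.filter (fun j : Fin (n+1) => n ≤ (j:ℕ) + 0) = {Fin.last n} := by
    ext j
    have := j.isLt
    simp [Fin.last, Fin.ext_iff]
    omega
  rw [h, Finset.sum_singleton]

lemma isProbDist_vecMul_list {n : ℕ} : ∀ (ps : List ℝ), (∀ p ∈ ps, 0 ≤ p ∧ p ≤ 1) →
    ∀ ρ : Fin (n+1) → ℝ, IsProbDist ρ → IsProbDist (ρ ᵥ* (ps.map (adQ n)).prod) := by
  intro ps
  induction ps with
  | nil => intro _ ρ hρ; simpa [Matrix.vecMul_one] using hρ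
  | cons p ps ih =>
    intro hmem ρ hρ
    have h1 : IsProbDist (ρ ᵥ* adQ n p) :=
      isProbDist_vecMul_adQ (hmem p (by simp)).1 (hmem p (by simp)).2 hρ
    have h2 := ih (fun q hq => hmem q (by simp [hq])) _ h1
    simpa [List.map_cons, List.prod_cons, ← Matrix.vecMul_vecMul] using h2

lemma topsum_list {n : ℕ} : ∀ (ps : List ℝ) (r : ℕ), r + ps.length ≤ n →
    ∀ ρ : Fin (n+1) → ℝ,
    topsum n r (ρ ᵥ* (ps.map (adQ n)).prod) = ps.prod * topsum n (r + ps.length) ρ := by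
  intro ps
  induction ps with
  | nil => intro r _ ρ; simp [Matrix.vecMul_one]
  | cons p ps ih =>
    intro r hr ρ
    have hr' : r + ps.length ≤ n := by simp at hr; omega
    have hrn : r + ps.length < n := by simp at hr; omega
    calc topsum n r (ρ ᵥ* ((p :: ps).map (adQ n)).prod)
        = topsum n r ((ρ ᵥ* adQ n p) ᵥ* (ps.map (adQ n)).prod) := by
          rw [List.map_cons, List.prod_cons, ← Matrix.vecMul_vecMul]
      _ = ps.prod * topsum n (r + ps.length) (ρ ᵥ* adQ n p) := ih r hr' _
      _ = ps.prod * (p * topsum n (r + ps.length + 1) ρ) := by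
          rw [topsum_step hrn]
      _ = (p :: ps).prod * topsum n (r + (p :: ps).length) ρ := by
          rw [List.prod_cons, List.length_cons]
          have : r + ps.length + 1 = r + (ps.length + 1) := by omega
          rw [this]
          ring


lemma prod_one_sub_bound {ι : Type*} (S : Finset ι) (x : ι → ℝ)
    (hx : ∀ i ∈ S, 0 ≤ x i ∧ x i ≤ 1) :
    (1 + ∑ i ∈ S, x i) * ∏ i ∈ S, (1 - x i) ≤ 1 := by
  induction S using Finset.cons_induction with
  | empty => simp
  | cons a S ha ih =>
    have hxa := hx a (by simp)
    have hS : ∀ i ∈ S, 0 ≤ x i ∧ x i ≤ 1 := fun i hi => hx i (by simp [hi])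
    have ihS := ih hS
    have hp : 0 ≤ ∏ i ∈ S, (1 - x i) :=
      Finset.prod_nonneg (fun i hi => by linarith [(hS i hi).2])
    have hs : 0 ≤ ∑ i ∈ S, x i := Finset.sum_nonneg (fun i hi => (hS i hi).1)
    rw [Finset.sum_cons, Finset.prod_cons]
    set s := ∑ i ∈ S, x i
    set P := ∏ i ∈ S, (1 - x i)
    have key : (1 + (x a + s)) * ((1 - x a) * P) ≤ (1 + s) * P := by
      have h1 : (1 + (x a + s)) * (1 - x a) ≤ 1 + s := by nlinarith [hxa.1, hxa.2]
      calc (1 + (x a + s)) * ((1 - x a) * P) = ((1 + (x a + s)) * (1 - x a)) * P := by ring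
        _ ≤ (1 + s) * P := mul_le_mul_of_nonneg_right h1 hp
    linarith
  
lemma tvDist_exDelta {n : ℕ} {μ : Fin (n+1) → ℝ} (hμ : IsProbDist μ) :
    tvDist μ (exDelta n) = 1 - μ (Fin.last n) := by
  have hle : μ (Fin.last n) ≤ 1 := by
    rw [← hμ.2]
    exact Finset.single_le_sum (fun i _ => hμ.1 i) (Finset.mem_univ _)
  unfold tvDist exDelta
  have h : ∀ x : Fin (n+1), |μ x - if (x:ℕ) = n then 1 else 0|
      = (if x = Fin.last n then 1 - 2 * μ x else 0) + μ x := by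
    intro x
    by_cases hx : x = Fin.last n
    · subst hx
      have h1 : ((Fin.last n : Fin (n+1)) : ℕ) = n := Fin.val_last n
      rw [if_pos h1, if_pos rfl, abs_of_nonpos (by linarith)]
      ring
    · have hxn : ¬ ((x:ℕ) = n) := fun h => hx (Fin.ext h)
      simp only [if_neg hxn, if_neg hx]
      rw [sub_zero, zero_add, abs_of_nonneg (hμ.1 x)]
  simp only [h]
  rw [Finset.sum_add_distrib,
    Finset.sum_ite_eq' Finset.univ (Fin.last n) (fun x => 1 - 2 * μ x), hμ.2]
  simp only [Finset.mem_univ, if_pos]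
  ring

lemma list_prod_range {M : Type*} [CommMonoid M] (g : ℕ → M) (k : ℕ) :
    ((List.range k).map g).prod = ∏ i ∈ Finset.range k, g i := by
  induction k with
  | zero => simp
  | succ k ih => rw [List.range_succ, List.map_append, List.prod_append,
      Finset.prod_range_succ, ih]; simp

set_option maxHeartbeats 2000000 in
/-- **Optimality of the bound in the Discrete Adiabatic Theorem:** for a schedule
`φ` whose first nonvanishing derivative at `1` is of order `m`, in the example on
`{0,…,n}` (where `t_mix = n`) any adiabatic time `T` achieving accuracy `ε` must
satisfy `T ≥ c (n^{m+1}/ε)^{1/m}`, with constants depending only on `φ` and `m`. -/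
theorem example_optimality_general
    (m : ℕ) (hm : 1 ≤ m) (φ : ℝ → ℝ)
    (hcont : ContinuousOn φ (Set.Icc 0 1))
    (h0 : φ 0 = 0) (h1 : φ 1 = 1)
    (hrange : ∀ s ∈ Set.Icc (0:ℝ) 1, φ s ∈ Set.Icc (0:ℝ) 1)
    (hsmooth : ∃ δ > (0:ℝ), ContDiffOn ℝ (m + 1) φ (Set.Icc (1 - δ) 1) ∧
      (∀ k : ℕ, 1 ≤ k → k < m → iteratedDerivWithin k φ (Set.Icc (1 - δ) 1) 1 = 0) ∧
      iteratedDerivWithin m φ (Set.Icc (1 - δ) 1) 1 ≠ 0) :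
    ∃ c > (0:ℝ), ∃ n₀ : ℕ, ∃ ε₀ ∈ Set.Ioo (0:ℝ) 1,
      ∀ n : ℕ, n₀ ≤ n → ∀ ε ∈ Set.Ioo (0:ℝ) ε₀, ∀ T : ℕ, n ≤ T →
      (∀ ν : Fin (n + 1) → ℝ, IsProbDist ν →
        tvDist (ν ᵥ* ((List.range T).map (fun j =>
            (1 - φ ((j + 1 : ℝ) / (T : ℝ))) • exPinit n
              + φ ((j + 1 : ℝ) / (T : ℝ)) • exPfin n)).prod)
          (exDelta n) ≤ ε) →
      (T : ℝ) ≥ c * ((n : ℝ) ^ (m + 1) / ε) ^ ((1 : ℝ) / (m : ℝ)) := by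
  obtain ⟨a, ha, δ₁, hδ₁0, hδ₁1, hφlow⟩ := step1 m hm φ h1 hrange hsmooth
  set A : ℝ := a * δ₁^(m+1) / 4^(m+1) with hA
  have hA0 : 0 < A := by positivity
  refine ⟨A ^ ((1:ℝ)/(m:ℝ)), Real.rpow_pos_of_pos hA0 _, ⌈(2:ℝ)/δ₁⌉₊ + 1, 1/2,
    ⟨by norm_num, by norm_num⟩, ?_⟩
  intro n hn ε hε T hT H
  have hm0 : (m:ℝ) ≠ 0 := Nat.cast_ne_zero.mpr (by omega)
  have hn2 : (2:ℝ)/δ₁ ≤ n := by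
    have h' : ⌈(2:ℝ)/δ₁⌉₊ ≤ n := by omega
    exact Nat.ceil_le.mp h'
  have hδn : 2 ≤ δ₁ * n := by
    rw [div_le_iff₀ hδ₁0] at hn2
    linarith
  have hn1 : 1 ≤ n := by omega
  have hT1 : 1 ≤ T := le_trans hn1 hT
  have hTR : (0:ℝ) < T := by exact_mod_cast hT1
  have hnT : (n:ℝ) ≤ T := Nat.cast_le.mpr hT
  have hnR : (1:ℝ) ≤ n := by exact_mod_cast hn1
  obtain ⟨hε0, hε2⟩ := hε
  -- parameters of the steps
  set f : ℕ → ℝ := fun j => φ (((j:ℝ) + 1) / (T:ℝ)) with hf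
  have hfmem : ∀ j : ℕ, j < T → 0 ≤ f j ∧ f j ≤ 1 := by
    intro j hj
    have hj1 : (j:ℝ) + 1 ≤ T := by exact_mod_cast Nat.succ_le_of_lt hj
    have harg : ((j:ℝ)+1)/(T:ℝ) ∈ Set.Icc (0:ℝ) 1 := by
      constructor
      · positivity
      · rw [div_le_one hTR]; exact hj1
    have hr := hrange _ harg
    exact ⟨hr.1, hr.2⟩
  -- instantiate the hypothesis at the point mass at 0
  set ν0 : Fin (n+1) → ℝ := fun j => if j = 0 then 1 else 0 with hν0
  have hν0P : IsProbDist ν0 := by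
    constructor
    · intro i; simp only [hν0]; split <;> norm_num
    · simp [hν0, Finset.sum_ite_eq' Finset.univ (0 : Fin (n+1)) (fun _ => (1:ℝ))]
  have Hν := H ν0 hν0P
  -- rewrite the matrix list using adQ
  have hcoe : ((List.range T : List ℕ) : List ℝ) = (List.range T).map (fun a : ℕ => (a:ℝ)) := by
    simp [List.map_eq_flatMap]
  rw [hcoe, List.map_map] at Hν
  have hmatfun : ((fun j : ℝ => (1 - φ ((j + 1) / (T:ℝ))) • exPinit n
      + φ ((j + 1) / (T:ℝ)) • exPfin n) ∘ (fun a : ℕ => (a:ℝ))) = fun j : ℕ => adQ n (f j) := rfl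
  rw [hmatfun] at Hν
  set g : ℕ → ℝ := fun i => f (T - n + i) with hg
  have hlist : (List.range T).map (fun j : ℕ => adQ n (f j))
      = ((List.range (T-n)).map f).map (adQ n) ++ ((List.range n).map g).map (adQ n) := by
    conv_lhs => rw [show T = (T - n) + n from (Nat.sub_add_cancel hT).symm]
    rw [List.range_add, List.map_append]
    simp only [List.map_map]
    rfl
  rw [hlist, List.prod_append, ← Matrix.vecMul_vecMul] at Hν
  set ρ : Fin (n+1) → ℝ := ν0 ᵥ* (((List.range (T-n)).map f).map (adQ n)).prod with hρdef
  have hρP : IsProbDist ρ := by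
    apply isProbDist_vecMul_list _ _ _ hν0P
    intro p hp
    obtain ⟨j, hj, rfl⟩ := List.mem_map.mp hp
    exact hfmem j (lt_of_lt_of_le (List.mem_range.mp hj) (Nat.sub_le _ _))
  have hμP : IsProbDist (ρ ᵥ* (((List.range n).map g).map (adQ n)).prod) := by
    apply isProbDist_vecMul_list _ _ _ hρP
    intro p hp
    obtain ⟨j, hj, rfl⟩ := List.mem_map.mp hp
    have hjn : j < n := List.mem_range.mp hj
    exact hfmem _ (by omega)
  -- the mass at the top state equals the product of the last n parameters
  have hlen : ((List.range n).map g).length = n := by simp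
  have hmass : (ρ ᵥ* (((List.range n).map g).map (adQ n)).prod) (Fin.last n)
      = ∏ i ∈ Finset.range n, g i := by
    rw [← topsum_zero n (ρ ᵥ* (((List.range n).map g).map (adQ n)).prod)]
    rw [topsum_list ((List.range n).map g) 0 (by rw [hlen]; omega), hlen, Nat.zero_add]
    rw [topsum_full hρP, list_prod_range]
    ring
  rw [tvDist_exDelta hμP, hmass] at Hν
  -- so the product is at least 1 - ε
  have hprod : 1 - ε ≤ ∏ i ∈ Finset.range n, g i := by linarith
  clear Hν hmass hμP hρP H hν0P hlist hcoe hmatfun hlen hρdef hν0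
  clear_value ρ ν0
  clear ρ ν0
  -- sum bound
  set x : ℕ → ℝ := fun i => 1 - g i with hx
  have hxmem : ∀ i ∈ Finset.range n, 0 ≤ x i ∧ x i ≤ 1 := by
    intro i hi
    have hin : i < n := Finset.mem_range.mp hi
    have := hfmem (T - n + i) (by omega)
    constructor <;> simp only [hx, hg] <;> linarith [this.1, this.2]
  have hpb := prod_one_sub_bound (Finset.range n) x hxmem
  have hprodeq : ∏ i ∈ Finset.range n, (1 - x i) = ∏ i ∈ Finset.range n, g i := by
    apply Finset.prod_congr rfl; intro i _; simp [hx]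
  rw [hprodeq] at hpb
  have hS0 : 0 ≤ ∑ i ∈ Finset.range n, x i :=
    Finset.sum_nonneg (fun i hi => (hxmem i hi).1)
  have hSle : ∑ i ∈ Finset.range n, x i ≤ 2 * ε := by
    nlinarith [hpb, hprod, hS0, hε0, hε2]
  -- reflect the sum
  have hrefl : ∑ k ∈ Finset.range n, x (n - 1 - k) = ∑ i ∈ Finset.range n, x i :=
    Finset.sum_range_reflect x n
  -- the cut-off K
  set K : ℕ := min n (⌊δ₁ * (T:ℝ)⌋₊ + 1) with hK
  have hKn : K ≤ n := min_le_left _ _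
  have hKfl : K ≤ ⌊δ₁ * (T:ℝ)⌋₊ + 1 := min_le_right _ _
  have hKδn : δ₁ * n ≤ (K:ℝ) := by
    have h1' : δ₁ * n ≤ (n:ℝ) := by nlinarith
    have h2' : δ₁ * n ≤ (⌊δ₁ * (T:ℝ)⌋₊ : ℝ) + 1 := by
      have hfl := Nat.lt_floor_add_one (δ₁ * (T:ℝ))
      nlinarith
    rw [hK]
    push_cast [Nat.cast_min]
    exact le_min h1' h2'
  have hK2 : (2:ℝ) ≤ (K:ℝ) := le_trans hδn hKδn
  have hK2n : 2 ≤ K := by exact_mod_cast hK2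
  clear_value K
  -- pointwise lower bound on reflected terms for k < K
  have hterm : ∀ k : ℕ, k < K → a * ((k:ℝ)/(T:ℝ))^m ≤ x (n - 1 - k) := by
    intro k hkK
    have hkn : k < n := lt_of_lt_of_le hkK hKn
    have hkfl : k ≤ ⌊δ₁ * (T:ℝ)⌋₊ := by omega

    have hkT : (k:ℝ) ≤ δ₁ * T :=
      le_trans (Nat.cast_le.mpr hkfl) (Nat.floor_le (by positivity))
    have hidx : T - n + (n - 1 - k) = T - (1 + k) := by omega
    have hcast : ((T - (1 + k) : ℕ) : ℝ) = (T:ℝ) - (1 + k) := by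
      have h1k : 1 + k ≤ T := by omega
      push_cast [Nat.cast_sub h1k]
      ring
    have hxval : x (n - 1 - k) = 1 - φ (1 - (k:ℝ)/(T:ℝ)) := by
      simp only [hx, hg, hf, hidx, hcast]
      congr 2
      field_simp
      ring
    have hargI : (1 - (k:ℝ)/(T:ℝ)) ∈ Set.Icc (1 - δ₁) 1 := by
      constructor
      · have hd : (k:ℝ)/T ≤ δ₁ := by
          rw [div_le_iff₀ hTR]
          calc (k:ℝ) ≤ δ₁ * T := hkT
            _ = δ₁ * T := rfl
        linarith
      · have hd : 0 ≤ (k:ℝ)/T := by positivity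
        linarith
    have := hφlow _ hargI
    rw [hxval]
    have heq : 1 - (1 - (k:ℝ)/(T:ℝ)) = (k:ℝ)/(T:ℝ) := by ring
    rw [heq] at this
    exact this
  -- lower bound the sum over range K
  have hsum1 : ∑ k ∈ Finset.range K, a * ((k:ℝ)/(T:ℝ))^m ≤ ∑ i ∈ Finset.range n, x i := by
    rw [← hrefl]
    calc ∑ k ∈ Finset.range K, a * ((k:ℝ)/(T:ℝ))^m
        ≤ ∑ k ∈ Finset.range K, x (n - 1 - k) := by
          apply Finset.sum_le_sum
          intro k hk
          exact hterm k (Finset.mem_range.mp hk)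
      _ ≤ ∑ k ∈ Finset.range n, x (n - 1 - k) := by
          apply Finset.sum_le_sum_of_subset_of_nonneg
          · exact Finset.range_subset_range.mpr hKn
          · intro k hk _
            have hkn : k < n := Finset.mem_range.mp hk
            exact (hxmem (n - 1 - k) (Finset.mem_range.mpr (by omega))).1
  -- lower bound via the top half
  set hh : ℕ := K / 2 with hhdef
  have hhK : hh ≤ K := Nat.div_le_self _ _
  have h2h₁ : 2 * hh ≤ K := by rw [hhdef]; omega
  have h2h₂ : K ≤ 2 * hh + 1 := by rw [hhdef]; omega
  clear_value hh
  have hsum2 : ((K - hh : ℕ) : ℝ) * (a * ((hh:ℝ)/(T:ℝ))^m)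
      ≤ ∑ k ∈ Finset.range K, a * ((k:ℝ)/(T:ℝ))^m := by
    calc ((K - hh : ℕ) : ℝ) * (a * ((hh:ℝ)/(T:ℝ))^m)
        = ∑ _k ∈ Finset.Ico hh K, (a * ((hh:ℝ)/(T:ℝ))^m) := by
          rw [Finset.sum_const, Nat.card_Ico, nsmul_eq_mul]
      _ ≤ ∑ k ∈ Finset.Ico hh K, a * ((k:ℝ)/(T:ℝ))^m := by
          apply Finset.sum_le_sum
          intro k hk
          have hhk : hh ≤ k := (Finset.mem_Ico.mp hk).1
          apply mul_le_mul_of_nonneg_left _ ha.le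
          apply pow_le_pow_left₀ (by positivity)
          gcongr

      _ ≤ ∑ k ∈ Finset.range K, a * ((k:ℝ)/(T:ℝ))^m := by
          apply Finset.sum_le_sum_of_subset_of_nonneg
          · intro k hk
            rw [Finset.mem_range]
            exact (Finset.mem_Ico.mp hk).2
          · intro k _ _
            positivity
  -- numeric facts about hh
  have hcastKh : ((K - hh : ℕ) : ℝ) = (K:ℝ) - (hh:ℝ) := by
    push_cast [Nat.cast_sub hhK]; ring
  have hhalf : (hh:ℝ) ≤ (K:ℝ)/2 := by
    have h2h' : (2:ℝ) * hh ≤ K := by exact_mod_cast h2h₁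
    linarith
  have hquarter : (K:ℝ)/4 ≤ (hh:ℝ) := by
    have h2h' : (K:ℝ) ≤ 2 * hh + 1 := by exact_mod_cast h2h₂
    linarith
  -- final chain
  have hmain : (δ₁ * n / 2) * (a * ((δ₁ * n)/(4*(T:ℝ)))^m) ≤ 2 * ε := by
    have e2 : (δ₁ * n)/(4*(T:ℝ)) ≤ (hh:ℝ)/(T:ℝ) := by
      rw [div_le_div_iff₀ (by positivity) hTR]
      have hK4 : δ₁ * n ≤ 4 * hh := by linarith
      have hprod' : (δ₁ * n) * T ≤ (4 * hh) * T := mul_le_mul_of_nonneg_right hK4 hTR.le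
      linarith
    have e3 : ((δ₁*n)/(4*(T:ℝ)))^m ≤ ((hh:ℝ)/(T:ℝ))^m := by
      apply pow_le_pow_left₀ (by positivity) e2
    have e4 : (δ₁ * n / 2) * (a * ((δ₁ * n)/(4*(T:ℝ)))^m)
        ≤ ((K:ℝ) - (hh:ℝ)) * (a * ((hh:ℝ)/(T:ℝ))^m) := by
      apply mul_le_mul
      · linarith
      · apply mul_le_mul_of_nonneg_left e3 ha.le
      · positivity
      · linarith
    rw [← hcastKh] at e4
    exact le_trans (le_trans e4 hsum2) (le_trans hsum1 hSle)
  -- turn into the power bound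
  have h6 : a * δ₁^(m+1) * (n:ℝ)^(m+1) ≤ 4^(m+1) * (ε * (T:ℝ)^m) := by
    have e1 : (δ₁ * n / 2) * (a * ((δ₁ * n)/(4*(T:ℝ)))^m)
        = a * δ₁^(m+1) * (n:ℝ)^(m+1) / (2 * 4^m * (T:ℝ)^m) := by
      rw [div_pow, mul_pow, mul_pow, pow_succ δ₁ m, pow_succ (n:ℝ) m]
      field_simp
    rw [e1, div_le_iff₀ (by positivity)] at hmain
    calc a * δ₁^(m+1) * (n:ℝ)^(m+1) ≤ 2 * ε * (2 * 4^m * (T:ℝ)^m) := hmain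
      _ = 4^(m+1) * (ε * (T:ℝ)^m) := by rw [pow_succ]; ring
  have h7 : A * ((n:ℝ)^(m+1)/ε) ≤ (T:ℝ)^m := by
    have e1 : A * ((n:ℝ)^(m+1)/ε) = (a * δ₁^(m+1) * (n:ℝ)^(m+1)) / (4^(m+1) * ε) := by
      rw [hA]; field_simp
    rw [e1, div_le_iff₀ (by positivity)]
    calc a * δ₁^(m+1) * (n:ℝ)^(m+1) ≤ 4^(m+1) * (ε * (T:ℝ)^m) := h6
      _ = (T:ℝ)^m * (4^(m+1) * ε) := by ring
  have h8 := Real.rpow_le_rpow (by positivity) h7 (by positivity : (0:ℝ) ≤ 1/(m:ℝ))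
  rw [Real.mul_rpow hA0.le (by positivity)] at h8
  have h9 : ((T:ℝ)^m) ^ ((1:ℝ)/(m:ℝ)) = (T:ℝ) := by
    rw [← Real.rpow_natCast (T:ℝ) m, ← Real.rpow_mul hTR.le]
    rw [mul_one_div, div_self hm0, Real.rpow_one]
  rw [h9] at h8
  exact h8
end
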